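/- arXiv:1205.1271 — 6 statements merged into one kernel-verified Lean document; each statement's English description precedes it below -/
import Mathlib

section
/- Let G be a directed graph, T ⊆ V(G), and let z be any vertex. Then there are at most 4^k members W of I_k such that z lies in the exact reverse shadow of W (i.e., W is a minimal z–T separator). -/
variable {V : Type*}

/-- `Reach E W a b`: there is a path from `a` to `b` in `G ∖ W`. -/
def Reach (E : V → V → Prop) (W : Set V) (a b : V) : Prop :=
  a ∉ W ∧ b ∉ W ∧ Relation.ReflTransGen (fun x y => E x y ∧ x ∉ W ∧ y ∉ W) a b

/-- `W` is an `X–Y` separator: it is disjoint from `X ∪ Y ∪ Vinf` (where `Vinf`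
is the set of undeletable vertices) and `G ∖ W` has no path from `X` to `Y`. -/
def IsSep (E : V → V → Prop) (Vinf X Y W : Set V) : Prop :=
  Disjoint W (X ∪ Y ∪ Vinf) ∧ ∀ x ∈ X, ∀ y ∈ Y, ¬ Reach E W x y

/-- A minimal `X–Y` separator: no proper subset is an `X–Y` separator. -/
def IsMinSep (E : V → V → Prop) (Vinf X Y W : Set V) : Prop :=
  IsSep E Vinf X Y W ∧ ∀ W' ⊂ W, ¬ IsSep E Vinf X Y W'

/-- `R⁺_{G∖W}(X)`: the set of vertices reachable from `X` in `G ∖ W`. -/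
def ReachSet (E : V → V → Prop) (W X : Set V) : Set V :=
  {b | ∃ a ∈ X, Reach E W a b}

/-- An important `X–Y` separator: a minimal `X–Y` separator `W` such that no
`X–Y` separator `W'` satisfies `|W'| ≤ |W|` and
`R⁺_{G∖W}(X) ⊊ R⁺_{G∖W'}(X)`. -/
def IsImpSep (E : V → V → Prop) (Vinf X Y W : Set V) : Prop :=
  IsMinSep E Vinf X Y W ∧
    ¬ ∃ W', IsSep E Vinf X Y W' ∧ W'.ncard ≤ W.ncard ∧
      ReachSet E W X ⊂ ReachSet E W' X

/-! ### Basic lemmas -/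

namespace ImpSepAux

variable {E : V → V → Prop} {Vinf X Y T W W' S A B R : Set V} {a b c v w x z : V}

/-- boundary of a set: out-neighbours outside it. -/
def bd (E : V → V → Prop) (R : Set V) : Set V := {u | u ∉ R ∧ ∃ r ∈ R, E r u}

lemma bd_disj : Disjoint (bd E R) R :=
  Set.disjoint_left.2 fun _ hu => hu.1

lemma reach_refl (h : a ∉ W) : Reach E W a a := ⟨h, h, .refl⟩

lemma reach_trans (h : Reach E W a b) (h' : Reach E W b c) : Reach E W a c :=
  ⟨h.1, h'.2.1, h.2.2.trans h'.2.2⟩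

lemma rtgMono {r p : V → V → Prop} (h : ∀ a b, r a b → p a b)
    (hab : Relation.ReflTransGen r a b) : Relation.ReflTransGen p a b :=
  Relation.ReflTransGen.mono h _ _ hab

lemma reach_mono (hsub : W' ⊆ W) (h : Reach E W a b) : Reach E W' a b :=
  ⟨fun hx => h.1 (hsub hx), fun hx => h.2.1 (hsub hx),
    rtgMono (fun _ _ hs => ⟨hs.1, fun hx => hs.2.1 (hsub hx), fun hx => hs.2.2 (hsub hx)⟩) h.2.2⟩

lemma reach_single (hE : E a b) (ha : a ∉ W) (hb : b ∉ W) : Reach E W a b :=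
  ⟨ha, hb, .single ⟨hE, ha, hb⟩⟩

lemma mem_reachSet_self (hx : x ∈ X) (h : x ∉ W) : x ∈ ReachSet E W X :=
  ⟨x, hx, reach_refl h⟩

lemma reachSet_not_mem (h : a ∈ ReachSet E W X) : a ∉ W := by
  obtain ⟨x, _, hr⟩ := h; exact hr.2.1

lemma reachSet_reach (h : a ∈ ReachSet E W X) (h' : Reach E W a b) : b ∈ ReachSet E W X := by
  obtain ⟨x, hx, hr⟩ := h; exact ⟨x, hx, reach_trans hr h'⟩

lemma reachSet_step (h : a ∈ ReachSet E W X) (hE : E a b) (hb : b ∉ W) :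
    b ∈ ReachSet E W X :=
  reachSet_reach h (reach_single hE (reachSet_not_mem h) hb)

lemma reachSet_mono (hsub : W' ⊆ W) : ReachSet E W X ⊆ ReachSet E W' X := by
  rintro a ⟨x, hx, hr⟩; exact ⟨x, hx, reach_mono hsub hr⟩

lemma reachSet_mono_src (hsub : X ⊆ S) : ReachSet E W X ⊆ ReachSet E W S := by
  rintro a ⟨x, hx, hr⟩; exact ⟨x, hsub hx, hr⟩

lemma bd_reachSet_subset : bd E (ReachSet E W X) ⊆ W := by
  rintro u ⟨hu, r, hr, hE⟩
  by_contra hw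
  exact hu (reachSet_step hr hE hw)

/-- a `W`-avoiding walk starting in a set closed under `W`-avoiding steps stays inside. -/
lemma reach_stay (hcl : ∀ p ∈ S, ∀ q, E p q → q ∉ W → q ∈ S)
    (h : Relation.ReflTransGen (fun x y => E x y ∧ x ∉ W ∧ y ∉ W) a b) (ha : a ∈ S) :
    b ∈ S := by
  induction h with
  | refl => exact ha
  | tail _ h2 ih => exact hcl _ ih _ h2.1 h2.2.2

/-- reach set is closed, so walks from inside stay inside. -/
lemma reachSet_stay (h : Reach E W a b) (ha : a ∈ ReachSet E W X) : b ∈ ReachSet E W X :=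
  reachSet_reach ha h

lemma reach_transfer (hcl : ∀ p ∈ S, ∀ q, E p q → q ∉ W → q ∈ S)
    (hd : ∀ u ∈ S, u ∉ W') (h : Reach E W a b) (ha : a ∈ S) : Reach E W' a b := by
  obtain ⟨h1, h2, h3⟩ := h
  clear h2
  have key : b ∈ S ∧ Relation.ReflTransGen (fun x y => E x y ∧ x ∉ W' ∧ y ∉ W') a b := by
    induction h3 with
    | refl => exact ⟨ha, .refl⟩
    | tail _ hstep ih =>
        have hbS := hcl _ ih.1 _ hstep.1 hstep.2.2
        exact ⟨hbS, ih.2.tail ⟨hstep.1, hd _ ih.1, hd _ hbS⟩⟩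
  exact ⟨hd a ha, hd b key.1, key.2⟩

/-! ### separator basics -/

lemma sep_X_not_mem (h : IsSep E Vinf X T W) (hx : x ∈ X) : x ∉ W :=
  Set.disjoint_right.1 h.1 (Or.inl (Or.inl hx))

lemma sep_T_not_mem (h : IsSep E Vinf X T W) (ht : b ∈ T) : b ∉ W :=
  Set.disjoint_right.1 h.1 (Or.inl (Or.inr ht))

lemma sep_X_subset (h : IsSep E Vinf X T W) : X ⊆ ReachSet E W X :=
  fun x hx => mem_reachSet_self hx (sep_X_not_mem h hx)

lemma sep_T_not_reach (h : IsSep E Vinf X T W) (ht : b ∈ T) : b ∉ ReachSet E W X := by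
  rintro ⟨x, hx, hr⟩; exact h.2 x hx b ht hr

lemma min_helper {w : V}
    (h : Relation.ReflTransGen (fun x y => E x y ∧ x ∉ (W \ {w}) ∧ y ∉ (W \ {w})) a b)
    (ha : a ∈ ReachSet E W X) :
    b ∈ ReachSet E W X ∨ ∃ c ∈ ReachSet E W X, E c w := by
  induction h with
  | refl => exact Or.inl ha
  | @tail p q hrtg hstep ih =>
    rcases ih with hc | hb
    · by_cases hq : q = w
      · exact Or.inr ⟨p, hc, hq ▸ hstep.1⟩
      · have hqW : q ∉ W := fun hmem => hstep.2.2 ⟨hmem, hq⟩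
        exact Or.inl (reachSet_step hc hstep.1 hqW)
    · exact Or.inr hb

lemma min_inneighbor (hW : IsMinSep E Vinf X T W) (hw : w ∈ W) :
    ∃ a ∈ ReachSet E W X, E a w := by
  by_contra hno
  push_neg at hno
  refine hW.2 (W \ {w}) (Set.sdiff_singleton_ssubset.2 hw) ⟨hW.1.1.mono_left Set.diff_subset, ?_⟩
  intro x hx t ht hr
  have hx' : x ∈ ReachSet E W X := mem_reachSet_self hx (sep_X_not_mem hW.1 hx)
  rcases min_helper hr.2.2 hx' with hT | ⟨c, hc, hE⟩
  · obtain ⟨x', hx'', hr'⟩ := hT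
    exact hW.1.2 x' hx'' t ht hr'
  · exact hno c hc hE

/-! ### submodularity -/

lemma bd_union_subset : bd E (A ∪ B) ⊆ bd E A ∪ bd E B := by
  rintro u ⟨hu, r, hr, hE⟩
  rcases hr with h | h
  · exact Or.inl ⟨fun hA => hu (Or.inl hA), r, h, hE⟩
  · exact Or.inr ⟨fun hB => hu (Or.inr hB), r, h, hE⟩

lemma bd_inter_subset : bd E (A ∩ B) ⊆ bd E A ∪ bd E B := by
  rintro u ⟨hu, r, hr, hE⟩
  by_cases hA : u ∈ A
  · exact Or.inr ⟨fun hB => hu ⟨hA, hB⟩, r, hr.2, hE⟩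
  · exact Or.inl ⟨hA, r, hr.1, hE⟩

lemma bd_union_inter : bd E (A ∪ B) ∩ bd E (A ∩ B) ⊆ bd E A ∩ bd E B := by
  rintro u ⟨⟨hu, _⟩, ⟨_, r, hr, hE⟩⟩
  exact ⟨⟨fun hA => hu (Or.inl hA), r, hr.1, hE⟩, ⟨fun hB => hu (Or.inr hB), r, hr.2, hE⟩⟩

lemma bd_submod [Fintype V] (E : V → V → Prop) (A B : Set V) :
    (bd E (A ∪ B)).ncard + (bd E (A ∩ B)).ncard ≤ (bd E A).ncard + (bd E B).ncard := by
  have h1 : (bd E (A ∪ B)).ncard + (bd E (A ∩ B)).ncard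
      = (bd E (A ∪ B) ∪ bd E (A ∩ B)).ncard + (bd E (A ∪ B) ∩ bd E (A ∩ B)).ncard :=
    (Set.ncard_union_add_ncard_inter _ _).symm
  have h2 : (bd E (A ∪ B) ∪ bd E (A ∩ B)).ncard ≤ (bd E A ∪ bd E B).ncard :=
    Set.ncard_le_ncard (Set.union_subset bd_union_subset bd_inter_subset) (Set.toFinite _)
  have h3 : (bd E (A ∪ B) ∩ bd E (A ∩ B)).ncard ≤ (bd E A ∩ bd E B).ncard :=
    Set.ncard_le_ncard bd_union_inter (Set.toFinite _)
  have h4 : (bd E A ∪ bd E B).ncard + (bd E A ∩ bd E B).ncard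
      = (bd E A).ncard + (bd E B).ncard := Set.ncard_union_add_ncard_inter _ _
  omega

/-! ### valid closed sets -/

lemma bd_step {p q : V} (hp : p ∈ R) (hE : E p q) (hq : q ∉ bd E R) : q ∈ R := by
  by_contra h
  exact hq ⟨h, p, hp, hE⟩

lemma reachSet_bd_subset (hX : X ⊆ R) : ReachSet E (bd E R) X ⊆ R := by
  rintro a ⟨x, hx, hr⟩
  exact reach_stay (fun p hp q hE hq => bd_step hp hE hq) hr.2.2 (hX hx)

/-- `ValidC R`: `R` induces a separator `bd E R` and is its reach set. -/
def ValidC (E : V → V → Prop) (Vinf X T R : Set V) : Prop :=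
  X ⊆ R ∧ (∀ t ∈ T, t ∉ R) ∧ Disjoint (bd E R) (T ∪ Vinf) ∧ R = ReachSet E (bd E R) X

lemma bd_is_sep (h1 : X ⊆ R) (h2 : ∀ t ∈ T, t ∉ R) (h3 : Disjoint (bd E R) (T ∪ Vinf)) :
    IsSep E Vinf X T (bd E R) := by
  constructor
  · rw [Set.disjoint_left]
    rintro u hu ((h | h) | h)
    · exact hu.1 (h1 h)
    · exact Set.disjoint_left.1 h3 hu (Or.inl h)
    · exact Set.disjoint_left.1 h3 hu (Or.inr h)
  · intro x hx t ht hr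
    exact h2 t ht (reach_stay (fun p hp q hE hq => bd_step hp hE hq) hr.2.2 (h1 hx))

lemma validC_bd_sep (h : ValidC E Vinf X T R) : IsSep E Vinf X T (bd E R) :=
  bd_is_sep h.1 h.2.1 h.2.2.1

lemma closed_transfer (hR : R = ReachSet E (bd E R) X) (hX : X ⊆ R)
    (hd : ∀ u ∈ R, u ∉ W') (ha : a ∈ R) : a ∈ ReachSet E W' X := by
  rw [hR] at ha
  obtain ⟨x, hx, hr⟩ := ha
  exact ⟨x, hx, reach_transfer (fun p hp q hE hq => bd_step hp hE hq) hd hr (hX hx)⟩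

lemma validC_reachSet (hW : IsSep E Vinf X T W) :
    ValidC E Vinf X T (ReachSet E W X) ∧ bd E (ReachSet E W X) ⊆ W := by
  refine ⟨⟨sep_X_subset hW, fun t ht => sep_T_not_reach hW ht, ?_, ?_⟩, bd_reachSet_subset⟩
  · exact (hW.1.mono_left bd_reachSet_subset).mono_right
      (Set.union_subset ((Set.subset_union_right).trans (Set.subset_union_left))
        Set.subset_union_right)
  · apply Set.Subset.antisymm
    · rintro a ⟨x, hx, hr⟩
      refine ⟨x, hx, reach_transfer (fun p hp q hE hq => reachSet_step hp hE hq)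
        (fun u hu hb => hb.1 hu) hr (sep_X_subset hW hx)⟩
    · exact reachSet_bd_subset (sep_X_subset hW)

lemma validC_union (h1 : ValidC E Vinf X T A) (h2 : ValidC E Vinf X T B) :
    ValidC E Vinf X T (A ∪ B) := by
  refine ⟨h1.1.trans Set.subset_union_left,
    fun t ht => by rintro (h | h); exacts [h1.2.1 t ht h, h2.2.1 t ht h], ?_, ?_⟩
  · rw [Set.disjoint_left]
    intro u hu hmem
    rcases bd_union_subset hu with h | h
    · exact Set.disjoint_left.1 h1.2.2.1 h hmem
    · exact Set.disjoint_left.1 h2.2.2.1 h hmem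
  · apply Set.Subset.antisymm
    · rintro a (ha | ha)
      · exact closed_transfer h1.2.2.2 h1.1
          (fun u hu hb => hb.1 (Or.inl hu)) ha
      · exact closed_transfer h2.2.2.2 h2.1
          (fun u hu hb => hb.1 (Or.inr hu)) ha
    · exact reachSet_bd_subset (h1.1.trans Set.subset_union_left)

lemma bd_inter_sep (h1 : ValidC E Vinf X T A) (h2 : ValidC E Vinf X T B) :
    IsSep E Vinf X T (bd E (A ∩ B)) := by
  refine bd_is_sep (Set.subset_inter h1.1 h2.1)
    (fun t ht => by rintro ⟨h, _⟩; exact h1.2.1 t ht h) ?_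
  rw [Set.disjoint_left]
  intro u hu hmem
  rcases bd_inter_subset hu with h | h
  · exact Set.disjoint_left.1 h1.2.2.1 h hmem
  · exact Set.disjoint_left.1 h2.2.2.1 h hmem

/-! ### maximal minimum cut -/

lemma exists_Rmax [Fintype V] {lam : ℕ}
    (hlam : ∀ U, IsSep E Vinf X T U → lam ≤ U.ncard)
    (hex : ∃ R, ValidC E Vinf X T R ∧ (bd E R).ncard = lam) :
    ∃ Rmax, ValidC E Vinf X T Rmax ∧ (bd E Rmax).ncard = lam ∧
      ∀ R, ValidC E Vinf X T R → (bd E R).ncard = lam → R ⊆ Rmax := by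
  classical
  obtain ⟨Rmax, ⟨hRv, hRc⟩, hRmaxwrt⟩ := Set.Finite.exists_maximalFor Set.ncard
    {R | ValidC E Vinf X T R ∧ (bd E R).ncard = lam} (Set.toFinite _) hex
  refine ⟨Rmax, hRv, hRc, fun R hv hc => ?_⟩
  have hvu : ValidC E Vinf X T (R ∪ Rmax) := validC_union hv hRv
  have hcu : (bd E (R ∪ Rmax)).ncard = lam := by
    have hle := bd_submod E R Rmax
    have hl1 := hlam _ (bd_inter_sep hv hRv)
    have hl2 := hlam _ (validC_bd_sep hvu)
    omega
  have := @hRmaxwrt (R ∪ Rmax) ⟨hvu, hcu⟩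
    (Set.ncard_le_ncard Set.subset_union_right (Set.toFinite _))
  have heq : Rmax = R ∪ Rmax :=
    Set.eq_of_subset_of_ncard_le Set.subset_union_right this (Set.toFinite _)
  rw [heq]
  exact Set.subset_union_left

lemma imp_reach_max [Fintype V] {lam : ℕ} {Rmax : Set V}
    (hlam : ∀ U, IsSep E Vinf X T U → lam ≤ U.ncard)
    (hRv : ValidC E Vinf X T Rmax) (hRc : (bd E Rmax).ncard = lam)
    (hmax : ∀ R, ValidC E Vinf X T R → (bd E R).ncard = lam → R ⊆ Rmax)
    (hW : IsImpSep E Vinf X T W) : Rmax ⊆ ReachSet E W X := by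
  classical
  by_contra hnot
  set R := ReachSet E W X with hRdef
  obtain ⟨hRval, hRbd⟩ := validC_reachSet hW.1.1
  have hvu : ValidC E Vinf X T (R ∪ Rmax) := validC_union hRval hRv
  have hcu : (bd E (R ∪ Rmax)).ncard ≤ W.ncard := by
    have hle := bd_submod E R Rmax
    have hl1 := hlam _ (bd_inter_sep hRval hRv)
    have h2 : (bd E R).ncard ≤ W.ncard := Set.ncard_le_ncard hRbd (Set.toFinite _)
    rw [← hRdef] at hl1
    omega
  obtain ⟨m, hmR, hmnot⟩ := Set.not_subset.1 hnot
  refine hW.2 ⟨bd E (R ∪ Rmax), validC_bd_sep hvu, hcu, ?_⟩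
  have hclos : R ∪ Rmax = ReachSet E (bd E (R ∪ Rmax)) X := hvu.2.2.2
  rw [← hRdef, ← hclos]
  exact (Set.ssubset_iff_of_subset Set.subset_union_left).2 ⟨m, Or.inr hmR, hmnot⟩

/-! ### branch 1 : vertex deletion -/

lemma del_sep_lift (hv : v ∉ X ∪ T ∪ Vinf)
    (hU : IsSep (fun x y => E x y ∧ x ≠ v ∧ y ≠ v) Vinf X T W') :
    IsSep E Vinf X T (insert v W') := by
  constructor
  · rw [Set.disjoint_left]
    rintro u (rfl | hu)
    · exact hv
    · exact Set.disjoint_left.1 hU.1 hu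
  · intro x hx t ht hr
    refine hU.2 x hx t ht ⟨fun h => hr.1 (Set.mem_insert_of_mem _ h),
      fun h => hr.2.1 (Set.mem_insert_of_mem _ h), ?_⟩
    refine rtgMono (fun p q hpq => ?_) hr.2.2
    exact ⟨⟨hpq.1, fun h => hpq.2.1 (by rw [h]; exact Set.mem_insert _ _),
        fun h => hpq.2.2 (by rw [h]; exact Set.mem_insert _ _)⟩,
      fun h => hpq.2.1 (Set.mem_insert_of_mem _ h),
      fun h => hpq.2.2 (Set.mem_insert_of_mem _ h)⟩

lemma no_reach_v {W'' : Set V} (hvX : v ∉ X)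
    (ha : a ∈ ReachSet (fun x y => E x y ∧ x ≠ v ∧ y ≠ v) W'' X) : a ≠ v := by
  obtain ⟨x, hx, hr⟩ := ha
  rcases hr.2.2.cases_tail with heq | ⟨c, _, hstep⟩
  · rintro rfl
    rw [heq] at hvX
    exact hvX hx
  · exact hstep.1.2.2

lemma reachSet_del_eq (hvX : v ∉ X) (hvW : v ∈ W) :
    ReachSet E W X = ReachSet (fun x y => E x y ∧ x ≠ v ∧ y ≠ v) (W \ {v}) X := by
  ext a; constructor
  · rintro ⟨x, hx, h1, h2, h3⟩
    refine ⟨x, hx, fun h => h1 h.1, fun h => h2 h.1, ?_⟩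
    refine rtgMono (fun p q hpq => ?_) h3
    exact ⟨⟨hpq.1, fun h => hpq.2.1 (by rw [h]; exact hvW),
        fun h => hpq.2.2 (by rw [h]; exact hvW)⟩,
      fun h => hpq.2.1 h.1, fun h => hpq.2.2 h.1⟩
  · rintro ⟨x, hx, h1, h2, h3⟩
    have hav : a ≠ v := no_reach_v hvX ⟨x, hx, h1, h2, h3⟩
    have hxv : x ≠ v := fun h => hvX (h ▸ hx)
    refine ⟨x, hx, fun h => h1 ⟨h, hxv⟩, fun h => h2 ⟨h, hav⟩, ?_⟩
    refine rtgMono (fun p q hpq => ?_) h3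
    exact ⟨hpq.1.1, fun h => hpq.2.1 ⟨h, hpq.1.2.1⟩, fun h => hpq.2.2 ⟨h, hpq.1.2.2⟩⟩

lemma reachSet_insert_eq (hvX : v ∉ X) (U : Set V) :
    ReachSet E (insert v U) X = ReachSet (fun x y => E x y ∧ x ≠ v ∧ y ≠ v) U X := by
  ext a; constructor
  · rintro ⟨x, hx, h1, h2, h3⟩
    refine ⟨x, hx, fun h => h1 (Set.mem_insert_of_mem _ h),
      fun h => h2 (Set.mem_insert_of_mem _ h), ?_⟩
    refine rtgMono (fun p q hpq => ?_) h3
    exact ⟨⟨hpq.1, fun h => hpq.2.1 (by rw [h]; exact Set.mem_insert _ _),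
        fun h => hpq.2.2 (by rw [h]; exact Set.mem_insert _ _)⟩,
      fun h => hpq.2.1 (Set.mem_insert_of_mem _ h),
      fun h => hpq.2.2 (Set.mem_insert_of_mem _ h)⟩
  · rintro ⟨x, hx, h1, h2, h3⟩
    have hav : a ≠ v := no_reach_v hvX ⟨x, hx, h1, h2, h3⟩
    have hxv : x ≠ v := fun h => hvX (h ▸ hx)
    refine ⟨x, hx, ?_, ?_, ?_⟩
    · rintro (h | h); exacts [hxv h, h1 h]
    · rintro (h | h); exacts [hav h, h2 h]
    · refine rtgMono (fun p q hpq => ?_) h3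
      refine ⟨hpq.1.1, ?_, ?_⟩
      · rintro (h | h); exacts [hpq.1.2.1 h, hpq.2.1 h]
      · rintro (h | h); exacts [hpq.1.2.2 h, hpq.2.2 h]

lemma del_imp [Fintype V] (hv : v ∉ X ∪ T ∪ Vinf) (hW : IsImpSep E Vinf X T W)
    (hvW : v ∈ W) :
    IsImpSep (fun x y => E x y ∧ x ≠ v ∧ y ≠ v) Vinf X T (W \ {v}) := by
  have hvX : v ∉ X := fun h => hv (Or.inl (Or.inl h))
  refine ⟨⟨⟨hW.1.1.1.mono_left Set.diff_subset, ?_⟩, ?_⟩, ?_⟩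
  · intro x hx t ht hr
    have ht' : t ∈ ReachSet (fun x y => E x y ∧ x ≠ v ∧ y ≠ v) (W \ {v}) X := ⟨x, hx, hr⟩
    rw [← reachSet_del_eq hvX hvW] at ht'
    obtain ⟨x', hx', hr'⟩ := ht'
    exact hW.1.1.2 x' hx' t ht hr'
  · intro U hUsub hU
    refine hW.1.2 (insert v U) ?_ (del_sep_lift hv hU)
    have hsub : insert v U ⊆ W :=
      Set.insert_subset hvW (hUsub.1.trans Set.diff_subset)
    obtain ⟨u, huW, huU⟩ := Set.exists_of_ssubset hUsub
    refine (Set.ssubset_iff_of_subset hsub).2 ⟨u, huW.1, ?_⟩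
    rintro (h | h); exacts [huW.2 h, huU h]
  · rintro ⟨U, hUsep, hUcard, hUss⟩
    have h1 : IsSep E Vinf X T (insert v U) := del_sep_lift hv hUsep
    have hWcard : 0 < W.ncard := (Set.ncard_pos (Set.toFinite _)).2 ⟨v, hvW⟩
    have hdiff : (W \ {v}).ncard = W.ncard - 1 := Set.ncard_diff_singleton_of_mem hvW
    have hins : (insert v U).ncard ≤ U.ncard + 1 := Set.ncard_insert_le _ _
    refine hW.2 ⟨insert v U, h1, by omega, ?_⟩
    rw [reachSet_del_eq hvX hvW, reachSet_insert_eq hvX]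
    exact hUss

/-! ### branch 2 : growing the source -/

variable {Rmax : Set V}

lemma S_subset_reach (hRv : ValidC E Vinf X T Rmax) (hv : v ∈ bd E Rmax)
    (hU : IsSep E Vinf (insert v Rmax) T W') : insert v Rmax ⊆ ReachSet E W' X := by
  have hd : ∀ u ∈ Rmax, u ∉ W' := fun u hu =>
    Set.disjoint_right.1 hU.1 (Or.inl (Or.inl (Set.mem_insert_of_mem _ hu)))
  have part1 : ∀ r ∈ Rmax, r ∈ ReachSet E W' X := fun r hr =>
    closed_transfer hRv.2.2.2 hRv.1 hd hr
  obtain ⟨hvnot, r, hrm, hE⟩ := hv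
  have hvW' : v ∉ W' :=
    Set.disjoint_right.1 hU.1 (Or.inl (Or.inl (Set.mem_insert _ _)))
  rintro s (rfl | hs)
  · exact reachSet_step (part1 r hrm) hE hvW'
  · exact part1 s hs

lemma S_sep_down (hRv : ValidC E Vinf X T Rmax)
    (hU : IsSep E Vinf (insert v Rmax) T W') : IsSep E Vinf X T W' := by
  constructor
  · refine hU.1.mono_right (Set.union_subset (Set.union_subset ?_ ?_) ?_)
    · exact (hRv.1.trans (Set.subset_insert _ _)).trans
        (Set.subset_union_left.trans Set.subset_union_left)
    · exact Set.subset_union_right.trans Set.subset_union_left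
    · exact Set.subset_union_right
  · intro x hx t ht hr
    exact hU.2 x (Set.mem_insert_of_mem _ (hRv.1 hx)) t ht hr

lemma S_imp (hRv : ValidC E Vinf X T Rmax) (hv : v ∈ bd E Rmax)
    (hWmax : Rmax ⊆ ReachSet E W X) (hW : IsImpSep E Vinf X T W) (hvW : v ∉ W) :
    IsImpSep E Vinf (insert v Rmax) T W := by
  obtain ⟨hvnot, r, hrm, hE⟩ := hv
  have hvR : v ∈ ReachSet E W X := reachSet_step (hWmax hrm) hE hvW
  have hSsub : insert v Rmax ⊆ ReachSet E W X := by
    rintro s (rfl | hs); exacts [hvR, hWmax hs]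
  refine ⟨⟨⟨?_, ?_⟩, ?_⟩, ?_⟩
  · rw [Set.disjoint_left]
    rintro w hwW ((h | h) | h)
    · exact reachSet_not_mem (hSsub h) hwW
    · exact Set.disjoint_left.1 hW.1.1.1 hwW (Or.inl (Or.inr h))
    · exact Set.disjoint_left.1 hW.1.1.1 hwW (Or.inr h)
  · intro s hs t ht hr
    obtain ⟨x, hx, hr'⟩ := hSsub hs
    exact hW.1.1.2 x hx t ht (reach_trans hr' hr)
  · intro U hUsub hU
    exact hW.1.2 U hUsub (S_sep_down hRv hU)
  · rintro ⟨U, hUsep, hUcard, hUss⟩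
    have hUX : IsSep E Vinf X T U := S_sep_down hRv hUsep
    have hSU : insert v Rmax ⊆ ReachSet E U X :=
      S_subset_reach hRv ⟨hvnot, r, hrm, hE⟩ hUsep
    have eq1 : ReachSet E W (insert v Rmax) = ReachSet E W X := by
      apply Set.Subset.antisymm
      · rintro a ⟨s, hs, hr'⟩
        exact reachSet_reach (hSsub hs) hr'
      · exact reachSet_mono_src (hRv.1.trans (Set.subset_insert _ _))
    have eq2 : ReachSet E U (insert v Rmax) = ReachSet E U X := by
      apply Set.Subset.antisymm
      · rintro a ⟨s, hs, hr'⟩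
        exact reachSet_reach (hSU hs) hr'
      · exact reachSet_mono_src (hRv.1.trans (Set.subset_insert _ _))
    refine hW.2 ⟨U, hUX, hUcard, ?_⟩
    rw [← eq1, ← eq2]
    exact hUss

lemma S_meas [Fintype V] {lam : ℕ}
    (hlam : ∀ U, IsSep E Vinf X T U → lam ≤ U.ncard)
    (hRv : ValidC E Vinf X T Rmax)
    (hmax : ∀ R, ValidC E Vinf X T R → (bd E R).ncard = lam → R ⊆ Rmax)
    (hv : v ∈ bd E Rmax)
    (hU : IsSep E Vinf (insert v Rmax) T W') : lam + 1 ≤ W'.ncard := by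
  by_contra hcon
  push_neg at hcon
  set R := ReachSet E W' (insert v Rmax) with hRdef
  have hSR : insert v Rmax ⊆ R := fun s hs =>
    mem_reachSet_self hs (Set.disjoint_right.1 hU.1 (Or.inl (Or.inl hs)))
  have hXR : X ⊆ R := (hRv.1.trans (Set.subset_insert _ _)).trans hSR
  have hbdU : bd E R ⊆ W' := bd_reachSet_subset
  have hTnot : ∀ t ∈ T, t ∉ R := fun t ht => sep_T_not_reach hU ht
  have hdisj : Disjoint (bd E R) (T ∪ Vinf) := by
    refine (hU.1.mono_left hbdU).mono_right (Set.union_subset ?_ ?_)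
    · exact Set.subset_union_right.trans Set.subset_union_left
    · exact Set.subset_union_right
  have hclos : R = ReachSet E (bd E R) X := by
    apply Set.Subset.antisymm
    · rintro a ⟨s, hs, hr⟩
      have hRmaxsub : ∀ p ∈ Rmax, p ∈ ReachSet E (bd E R) X := fun p hp =>
        closed_transfer hRv.2.2.2 hRv.1
          (fun u hu hb => hb.1 (hSR (Set.mem_insert_of_mem _ hu))) hp
      have step1 : s ∈ ReachSet E (bd E R) X := by
        rcases hs with rfl | hs'
        · obtain ⟨hvnot, p, hpm, hE⟩ := hv
          exact reachSet_step (hRmaxsub p hpm) hE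
            (fun hb => hb.1 (hSR (Set.mem_insert _ _)))
        · exact hRmaxsub s hs'
      have step2 : Reach E (bd E R) s a :=
        reach_transfer (fun p hp q hE hq => reachSet_step hp hE hq)
          (fun u hu hb => hb.1 hu) hr (hSR hs)
      exact reachSet_reach step1 step2
    · exact reachSet_bd_subset hXR
  have hcard : (bd E R).ncard = lam := by
    have h1 : (bd E R).ncard ≤ W'.ncard := Set.ncard_le_ncard hbdU (Set.toFinite _)
    have h2 : lam ≤ (bd E R).ncard := hlam _ (bd_is_sep hXR hTnot hdisj)
    omega
  have hsub := hmax R ⟨hXR, hTnot, hdisj, hclos⟩ hcard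
  exact hv.1 (hsub (hSR (Set.mem_insert _ _)))

/-! ### the main counting lemma -/

lemma count_imp [Fintype V] (mu : ℕ) :
    ∀ (E : V → V → Prop) (Vinf X T : Set V) (k : ℕ),
      (∀ U, IsSep E Vinf X T U → 2 * k ≤ mu + U.ncard) →
      {W : Set V | IsImpSep E Vinf X T W ∧ W.ncard ≤ k}.ncard ≤ 2 ^ mu := by
  induction mu using Nat.strong_induction_on with
  | _ mu IH =>
  intro E Vinf X T k hmeas
  classical
  by_cases hex : ∃ U, IsSep E Vinf X T U ∧ U.ncard ≤ k
  swap
  · have hempty : {W : Set V | IsImpSep E Vinf X T W ∧ W.ncard ≤ k} = ∅ := by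
      ext W
      simp only [Set.mem_setOf_eq, Set.mem_empty_iff_false, iff_false, not_and]
      intro hW hk
      exact hex ⟨W, hW.1.1, hk⟩
    rw [hempty]
    simp
  obtain ⟨U0, hU0, hU0k⟩ := hex
  have hne : {n | ∃ U, IsSep E Vinf X T U ∧ U.ncard = n}.Nonempty := ⟨U0.ncard, U0, hU0, rfl⟩
  set lam := sInf {n | ∃ U, IsSep E Vinf X T U ∧ U.ncard = n} with hlamdef
  obtain ⟨Wmin, hWminSep, hWminCard⟩ : lam ∈ {n | ∃ U, IsSep E Vinf X T U ∧ U.ncard = n} :=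
    Nat.sInf_mem hne
  have hlam : ∀ U, IsSep E Vinf X T U → lam ≤ U.ncard := fun U hU =>
    Nat.sInf_le ⟨U, hU, rfl⟩
  have hlamk : lam ≤ k := le_trans (hlam U0 hU0) hU0k
  rcases Nat.eq_zero_or_pos lam with hlam0 | hlampos
  · -- minimum cut is empty
    have hWminempty : Wmin = ∅ := (Set.ncard_eq_zero (Set.toFinite _)).1 (by omega)
    have hsub : {W : Set V | IsImpSep E Vinf X T W ∧ W.ncard ≤ k} ⊆ {(∅ : Set V)} := by
      rintro W ⟨hW, hk⟩
      by_contra hWne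
      have hWne' : W.Nonempty :=
        Set.nonempty_iff_ne_empty.2 (by simpa using hWne)
      obtain ⟨w, hw⟩ := hWne'
      obtain ⟨a, haRS, hE⟩ := min_inneighbor hW.1 hw
      refine hW.2 ⟨∅, hWminempty ▸ hWminSep, by simp, ?_⟩
      refine (Set.ssubset_iff_of_subset (reachSet_mono (Set.empty_subset _))).2 ⟨w, ?_, ?_⟩
      · exact reachSet_step (reachSet_mono (Set.empty_subset _) haRS) hE (Set.notMem_empty _)
      · intro hmem
        exact reachSet_not_mem hmem hw
    calc {W : Set V | IsImpSep E Vinf X T W ∧ W.ncard ≤ k}.ncard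
        ≤ ({(∅ : Set V)} : Set (Set V)).ncard := Set.ncard_le_ncard hsub (Set.toFinite _)
      _ = 1 := Set.ncard_singleton _
      _ ≤ 2 ^ mu := Nat.one_le_two_pow
  · -- minimum cut is nonempty : branch
    have hexR : ∃ R, ValidC E Vinf X T R ∧ (bd E R).ncard = lam := by
      obtain ⟨hval, hbdsub⟩ := validC_reachSet hWminSep
      refine ⟨ReachSet E Wmin X, hval, le_antisymm ?_ (hlam _ (validC_bd_sep hval))⟩
      calc (bd E (ReachSet E Wmin X)).ncard ≤ Wmin.ncard :=
            Set.ncard_le_ncard hbdsub (Set.toFinite _)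
        _ = lam := hWminCard
    obtain ⟨Rmax, hRv, hRc, hmax⟩ := exists_Rmax hlam hexR
    obtain ⟨v, hv⟩ : (bd E Rmax).Nonempty := Set.nonempty_of_ncard_ne_zero (by omega)
    have hvX : v ∉ X := fun h => hv.1 (hRv.1 h)
    have hvXTV : v ∉ X ∪ T ∪ Vinf := by
      rintro ((h | h) | h)
      · exact hvX h
      · exact Set.disjoint_left.1 hRv.2.2.1 hv (Or.inl h)
      · exact Set.disjoint_left.1 hRv.2.2.1 hv (Or.inr h)
    have hk1 : 1 ≤ k := le_trans hlampos hlamk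
    have hmeasWmin := hmeas Wmin hWminSep
    rw [hWminCard] at hmeasWmin
    have hmu1 : 1 ≤ mu := by omega
    set N := {W : Set V | IsImpSep E Vinf X T W ∧ W.ncard ≤ k} with hN
    have hNsplit : N = (N ∩ {W | v ∈ W}) ∪ (N ∩ {W | v ∉ W}) := by
      ext W
      by_cases h : v ∈ W <;> simp [Set.mem_inter_iff, Set.mem_union, h]
    have hmeas1 : ∀ U, IsSep (fun x y => E x y ∧ x ≠ v ∧ y ≠ v) Vinf X T U →
        2 * (k - 1) ≤ (mu - 1) + U.ncard := by
      intro U hU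
      have h1 := hmeas _ (del_sep_lift hvXTV hU)
      have h2 : (insert v U).ncard ≤ U.ncard + 1 := Set.ncard_insert_le _ _
      omega
    have hb1 : (N ∩ {W | v ∈ W}).ncard ≤ 2 ^ (mu - 1) := by
      have hinj : Set.InjOn (fun W => W \ {v}) (N ∩ {W | v ∈ W}) := by
        intro W1 h1 W2 h2 heq
        have h3 : insert v (W1 \ {v}) = insert v (W2 \ {v}) := by
          simp only at heq
          rw [heq]
        rwa [Set.insert_diff_singleton, Set.insert_diff_singleton,
          Set.insert_eq_of_mem (show v ∈ W1 from h1.2),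
          Set.insert_eq_of_mem (show v ∈ W2 from h2.2)] at h3
      have himg : (fun W => W \ {v}) '' (N ∩ {W | v ∈ W}) ⊆
          {W : Set V | IsImpSep (fun x y => E x y ∧ x ≠ v ∧ y ≠ v) Vinf X T W ∧
            W.ncard ≤ k - 1} := by
        rintro _ ⟨W, ⟨⟨hWimp, hWk⟩, hvW⟩, rfl⟩
        dsimp only
        refine ⟨del_imp hvXTV hWimp (show v ∈ W from hvW), ?_⟩
        have := Set.ncard_diff_singleton_of_mem (show v ∈ W from hvW)
        omega
      calc (N ∩ {W | v ∈ W}).ncard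
          = ((fun W => W \ {v}) '' (N ∩ {W | v ∈ W})).ncard :=
            (Set.ncard_image_of_injOn hinj).symm
        _ ≤ _ := Set.ncard_le_ncard himg (Set.toFinite _)
        _ ≤ 2 ^ (mu - 1) := IH (mu - 1) (by omega) _ Vinf X T (k - 1) hmeas1
    have hmeas2 : ∀ U, IsSep E Vinf (insert v Rmax) T U →
        2 * k ≤ (mu - 1) + U.ncard := by
      intro U hU
      have := S_meas hlam hRv hmax hv hU
      omega
    have hb2 : (N ∩ {W | v ∉ W}).ncard ≤ 2 ^ (mu - 1) := by
      have hsub2 : N ∩ {W | v ∉ W} ⊆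
          {W : Set V | IsImpSep E Vinf (insert v Rmax) T W ∧ W.ncard ≤ k} := by
        rintro W ⟨⟨hWimp, hWk⟩, hvW⟩
        exact ⟨S_imp hRv hv (imp_reach_max hlam hRv hRc hmax hWimp) hWimp hvW, hWk⟩
      calc (N ∩ {W | v ∉ W}).ncard ≤ _ := Set.ncard_le_ncard hsub2 (Set.toFinite _)
        _ ≤ 2 ^ (mu - 1) := IH (mu - 1) (by omega) E Vinf (insert v Rmax) T k hmeas2
    calc N.ncard ≤ (N ∩ {W | v ∈ W}).ncard + (N ∩ {W | v ∉ W}).ncard := by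
          conv_lhs => rw [hNsplit]
          exact Set.ncard_union_le _ _
      _ ≤ 2 ^ (mu - 1) + 2 ^ (mu - 1) := add_le_add hb1 hb2
      _ = 2 ^ mu := by
          have hmueq : mu - 1 + 1 = mu := by omega
          conv_rhs => rw [← hmueq, pow_succ]
          omega

/-! ### importance transfers to `z` in the exact reverse shadow -/

lemma lemA [Fintype V] (hW : IsImpSep E Vinf X T W) (hz : IsMinSep E Vinf {z} T W) :
    IsImpSep E Vinf {z} T W := by
  refine ⟨hz, ?_⟩
  rintro ⟨W', hsep', hcard', hss⟩
  set A := ReachSet E W (X ∪ {z}) with hA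
  set B := ReachSet E W' {z} with hB
  have hzB : ReachSet E W {z} ⊆ B := hss.subset
  have hbdA : bd E A = W := by
    apply Set.Subset.antisymm bd_reachSet_subset
    intro w hw
    obtain ⟨a, haRS, hE⟩ := min_inneighbor hW.1 hw
    have haA : a ∈ A := reachSet_mono_src Set.subset_union_left haRS
    exact ⟨fun hmem => reachSet_not_mem hmem hw, a, haA, hE⟩
  have hWbd : W ⊆ bd E (A ∩ B) := by
    intro w hw
    obtain ⟨a, haRS, hE⟩ := min_inneighbor hz hw
    have haA : a ∈ A := reachSet_mono_src Set.subset_union_right haRS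
    have haB : a ∈ B := hzB haRS
    exact ⟨fun hmem => reachSet_not_mem hmem.1 hw, a, ⟨haA, haB⟩, hE⟩
  have hsize : (bd E (A ∪ B)).ncard ≤ W'.ncard := by
    have h1 := bd_submod E A B
    have h2 : (bd E B).ncard ≤ W'.ncard :=
      Set.ncard_le_ncard bd_reachSet_subset (Set.toFinite _)
    have h3 : W.ncard ≤ (bd E (A ∩ B)).ncard :=
      Set.ncard_le_ncard hWbd (Set.toFinite _)
    rw [hbdA] at h1
    omega
  have hXsub : X ⊆ A ∪ B := fun x hx =>
    Or.inl (mem_reachSet_self (Or.inl hx) (sep_X_not_mem hW.1.1 hx))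
  have hTnot : ∀ t ∈ T, t ∉ A ∪ B := by
    rintro t ht (h | h)
    · obtain ⟨a, ha, hr⟩ := h
      rcases ha with ha | ha
      · exact hW.1.1.2 a ha t ht hr
      · exact hz.1.2 a ha t ht hr
    · exact sep_T_not_reach hsep' ht h
  have hdisj : Disjoint (bd E (A ∪ B)) (T ∪ Vinf) := by
    rw [Set.disjoint_left]
    intro u hu hmem
    rcases bd_union_subset hu with h | h
    · rw [hbdA] at h
      exact Set.disjoint_left.1 hW.1.1.1 h
        (Or.elim hmem (fun h' => Or.inl (Or.inr h')) Or.inr)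
    · exact Set.disjoint_left.1 hsep'.1 (bd_reachSet_subset h)
        (Or.elim hmem (fun h' => Or.inl (Or.inr h')) Or.inr)
  have hsepAB : IsSep E Vinf X T (bd E (A ∪ B)) := bd_is_sep hXsub hTnot hdisj
  have hRsub : ReachSet E W X ⊆ ReachSet E (bd E (A ∪ B)) X := by
    rintro a ⟨x, hx, hr⟩
    refine ⟨x, hx, reach_transfer (S := ReachSet E W X)
      (fun p hp q hE hq => reachSet_step hp hE hq) ?_ hr (mem_reachSet_self hx hr.1)⟩
    intro u hu hb
    exact hb.1 (Or.inl (reachSet_mono_src Set.subset_union_left hu))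
  by_cases hWsub : W ⊆ bd E (A ∪ B)
  · have heq : W = bd E (A ∪ B) :=
      Set.eq_of_subset_of_ncard_le hWsub (by omega) (Set.toFinite _)
    obtain ⟨b, hbB, hbnot⟩ := Set.exists_of_ssubset hss
    apply hbnot
    obtain ⟨z', hz', hr⟩ := hbB
    refine ⟨z', hz', reach_transfer (S := B)
      (fun p hp q hE hq => reachSet_step hp hE hq) ?_ hr
      (mem_reachSet_self hz' (sep_X_not_mem hsep' hz'))⟩
    intro u hu huW
    exact (heq ▸ huW : u ∈ bd E (A ∪ B)).1 (Or.inr hu)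
  · obtain ⟨w, hwW, hwnot⟩ := Set.not_subset.1 hWsub
    obtain ⟨a, haRS, hE⟩ := min_inneighbor hW.1 hwW
    refine hW.2 ⟨bd E (A ∪ B), hsepAB, by omega, ?_⟩
    refine (Set.ssubset_iff_of_subset hRsub).2
      ⟨w, ?_, fun hmem => reachSet_not_mem hmem hwW⟩
    exact reachSet_step (hRsub haRS) hE hwnot

end ImpSepAux

/-- For any vertex `z` there are at most `4^k` members `W` of `I_k` (the
collection of important `v–T` separators of size at most `k` for some `v ∉ T`)
such that `z` lies in the exact reverse shadow of `W`, i.e., `W` is a minimal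
`z–T` separator. -/
theorem stmt8 [Fintype V] (E : V → V → Prop) (Vinf T : Set V) (k : ℕ) (z : V) :
    {W : Set V | (∃ v ∉ T, IsImpSep E Vinf {v} T W ∧ W.ncard ≤ k) ∧
        IsMinSep E Vinf {z} T W}.ncard ≤ 4 ^ k := by
  classical
  have hsub : {W : Set V | (∃ v ∉ T, IsImpSep E Vinf {v} T W ∧ W.ncard ≤ k) ∧
      IsMinSep E Vinf {z} T W} ⊆ {W : Set V | IsImpSep E Vinf {z} T W ∧ W.ncard ≤ k} := by
    rintro W ⟨⟨v, hv, hImp, hcard⟩, hmin⟩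
    exact ⟨ImpSepAux.lemA hImp hmin, hcard⟩
  calc {W : Set V | (∃ v ∉ T, IsImpSep E Vinf {v} T W ∧ W.ncard ≤ k) ∧
      IsMinSep E Vinf {z} T W}.ncard
      ≤ {W : Set V | IsImpSep E Vinf {z} T W ∧ W.ncard ≤ k}.ncard :=
        Set.ncard_le_ncard hsub (Set.toFinite _)
    _ ≤ 2 ^ (2 * k) := ImpSepAux.count_imp (2 * k) E Vinf {z} T k
        (fun U _ => Nat.le_add_right _ _)
    _ = 4 ^ k := by rw [pow_mul]; norm_num
end

section
/- If W is a minimum F-transversal for a T-connected family F of subgraphs of G, then W is thin: no vertex v ∈ W lies in the reverse shadow of W ∖ {v} with respect to T. -/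
variable {V : Type*}

/-- The reverse shadow `r(W)` of `W` with respect to `T`: vertices `v ∉ W ∪ T`
such that `W` is a `v–T` separator (every `v`-to-`T` path meets `W`). -/
def rshadow (E : V → V → Prop) (T W : Set V) : Set V :=
  {v | v ∉ W ∧ v ∉ T ∧ ∀ t ∈ T, ¬ Reach E W v t}

/-- The forward shadow `f(W)` of `W` with respect to `T`: vertices `v ∉ W ∪ T`
such that `W` is a `T–v` separator (every `T`-to-`v` path meets `W`). -/
def fshadow (E : V → V → Prop) (T W : Set V) : Set V :=
  {v | v ∉ W ∧ v ∉ T ∧ ∀ t ∈ T, ¬ Reach E W t v}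

/-- A subgraph of the directed graph with edge relation `E`. -/
structure DiSubgraph (E : V → V → Prop) where
  verts : Set V
  edges : V → V → Prop
  edges_sub : ∀ a b, edges a b → E a b
  edge_vert_left : ∀ a b, edges a b → a ∈ verts
  edge_vert_right : ∀ a b, edges a b → b ∈ verts

/-- A family `F` of subgraphs is `T`-connected if every vertex of each member
can reach some vertex of `T` and is reachable from some vertex of `T` by walks
completely contained in that member. -/
def TConnected {E : V → V → Prop} (T : Set V) (F : Set (DiSubgraph E)) : Prop :=
  ∀ Fi ∈ F, ∀ v ∈ Fi.verts,
    (∃ t ∈ T, Relation.ReflTransGen Fi.edges v t) ∧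
    (∃ t ∈ T, Relation.ReflTransGen Fi.edges t v)

/-- An `F`-transversal: a vertex set intersecting every member of `F`. -/
def IsTransversal {E : V → V → Prop} (F : Set (DiSubgraph E)) (W : Set V) : Prop :=
  ∀ Fi ∈ F, (W ∩ Fi.verts).Nonempty

/-- If `W` is a minimum `F`-transversal for a `T`-connected family `F`, then `W`
is thin: no vertex `v ∈ W` lies in the reverse shadow of `W ∖ {v}`. -/
theorem stmt10 [Fintype V] (E : V → V → Prop) (T : Set V)
    (F : Set (DiSubgraph E)) (hF : TConnected T F)
    (W : Set V) (hW : IsTransversal F W)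
    (hmin : ∀ W' : Set V, IsTransversal F W' → W.ncard ≤ W'.ncard) :
    ∀ v ∈ W, v ∉ rshadow E T (W \ {v}) := by
  intro v hv hcon
  obtain ⟨hvW', hvT, hsep⟩ := hcon
  -- W \ {v} is a transversal
  have htrans : IsTransversal F (W \ {v}) := by
    intro Fi hFi
    by_cases h : ∃ u ∈ W ∩ Fi.verts, u ≠ v
    · obtain ⟨u, ⟨huW, huV⟩, hune⟩ := h
      exact ⟨u, ⟨huW, hune⟩, huV⟩
    · push_neg at h
      -- W ∩ Fi.verts ⊆ {v}, and it's nonempty, so v ∈ Fi.verts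
      obtain ⟨u, hu⟩ := hW Fi hFi
      have huv : u = v := h u hu
      subst huv
      have hvV : u ∈ Fi.verts := hu.2
      have havoid : ∀ x ∈ Fi.verts, x ∉ W \ {u} := by
        intro x hx ⟨hxW, hxne⟩
        exact hxne (h x ⟨hxW, hx⟩)
      obtain ⟨⟨t, htT, hwalk⟩, -⟩ := hF Fi hFi u hvV
      exfalso
      apply hsep t htT
      -- t ∉ W \ {u}
      have htnot : t ∉ W \ {u} := by
        rcases hwalk.cases_tail with heq | ⟨c, -, hedge⟩
        · subst heq; exact hvW'
        · exact havoid t (Fi.edge_vert_right c t hedge)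
      refine ⟨hvW', htnot, ?_⟩
      refine Relation.ReflTransGen.mono ?_ _ _ hwalk
      intro a b hab
      exact ⟨Fi.edges_sub a b hab, havoid a (Fi.edge_vert_left a b hab),
        havoid b (Fi.edge_vert_right a b hab)⟩
  have hlt : (W \ {v}).ncard < W.ncard :=
    Set.ncard_diff_singleton_lt_of_mem hv W.toFinite
  exact absurd (hmin _ htrans) (not_le.mpr hlt)
end

section
/- Torso preserves separation: Let G be a directed graph, C ⊆ V(G), and let G' be the torso of G on C (vertex set C, with an edge (a,b) whenever G has an a→b walk with no internal vertex in C). Then for any W ⊆ C and a, b ∈ C ∖ W, the graph G ∖ W has an a→b path if and only if G' ∖ W has an a→b path. -/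
variable {V : Type*}

/-- `l` is a walk from `a` to `b` in the graph with edge relation `E`. -/
def WalkFromTo (E : V → V → Prop) (a b : V) (l : List V) : Prop :=
  l.Chain' E ∧ l.head? = some a ∧ l.getLast? = some b

/-- The edge relation of the torso of `G` on `C`: there is an edge `(a,b)`
whenever `G` has an `a → b` walk whose internal vertices all lie outside `C`. -/
def torsoE (E : V → V → Prop) (C : Set V) : V → V → Prop := fun a b =>
  a ∈ C ∧ b ∈ C ∧ ∃ l : List V, WalkFromTo E a b l ∧ 2 ≤ l.length ∧
    ∀ x ∈ l.tail.dropLast, x ∉ C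

/-- The marked edge set `S'` of the torso: edges of `S` with both endpoints in
`C`, together with every torso edge `(a,b)` arising from an `a → b` walk with
internal vertices outside `C` that contains an edge of `S`. -/
def torsoS (E : V → V → Prop) (C : Set V) (S : Set (V × V)) : Set (V × V) :=
  {p | p ∈ S ∧ p.1 ∈ C ∧ p.2 ∈ C} ∪
    {p | p.1 ∈ C ∧ p.2 ∈ C ∧ ∃ l : List V, WalkFromTo E p.1 p.2 l ∧
      2 ≤ l.length ∧ (∀ x ∈ l.tail.dropLast, x ∉ C) ∧
      ∃ q ∈ l.zip l.tail, q ∈ S}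

/-- `G ∖ W` has a closed walk through `v` using an edge of `S`. -/
def HasSCWThrough (E : V → V → Prop) (S : Set (V × V)) (W : Set V) (v : V) : Prop :=
  ∃ l : List V, l.Chain' E ∧ 2 ≤ l.length ∧ l.head? = l.getLast? ∧
    (∀ x ∈ l, x ∉ W) ∧ v ∈ l ∧ ∃ q ∈ l.zip l.tail, q ∈ S

/-- `G ∖ W` has a closed walk using an edge of `S` (an `S`-closed-walk). -/
def HasSCW (E : V → V → Prop) (S : Set (V × V)) (W : Set V) : Prop :=
  ∃ v, HasSCWThrough E S W v

private lemma reach_of_walk' (E : V → V → Prop) (W : Set V) :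
    ∀ (l : List V) (a b : V), l.Chain' E → l.head? = some a → l.getLast? = some b →
      (∀ x ∈ l, x ∉ W) →
      Relation.ReflTransGen (fun x y => E x y ∧ x ∉ W ∧ y ∉ W) a b := by
  intro l
  induction l with
  | nil => intro a b _ h; simp at h
  | cons x xs ih =>
    intro a b hc hh hl hW
    simp at hh; subst hh
    cases xs with
    | nil => simp at hl; subst hl; exact .refl
    | cons y ys =>
      simp only [List.Chain', List.isChain_cons_cons] at hc
      rw [List.getLast?_cons_cons] at hl
      exact Relation.ReflTransGen.head ⟨hc.1, hW x (by simp), hW y (by simp)⟩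
        (ih y b hc.2 rfl hl (fun v hv => hW v (by simp [hv])))

private lemma mem_decomp' (l : List V) (a b : V) (hh : l.head? = some a)
    (hl : l.getLast? = some b) (v : V) (hv : v ∈ l) :
    v = a ∨ v = b ∨ v ∈ l.tail.dropLast := by
  cases l with
  | nil => simp at hv
  | cons x xs =>
    simp at hh; subst hh
    rcases List.mem_cons.1 hv with h | h
    · exact Or.inl h
    · cases xs with
      | nil => simp at h
      | cons y ys =>
        rw [List.getLast?_cons_cons] at hl
        have hne : (y :: ys) ≠ [] := by simp
        have hb : b = (y :: ys).getLast hne := (List.mem_getLast?_eq_getLast hl).2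
        have hdec := List.dropLast_append_getLast hne
        rw [← hdec] at h
        rcases List.mem_append.1 h with h | h
        · exact Or.inr (Or.inr h)
        · simp at h; subst h; exact Or.inr (Or.inl hb.symm)

private lemma getLast?_cons_of_ne' (x : V) {l : List V} (h : l ≠ []) :
    (x :: l).getLast? = l.getLast? := by
  cases l with
  | nil => exact absurd rfl h
  | cons y ys => rw [List.getLast?_cons_cons]

/-- Torso preserves separation: for `W ⊆ C` and `a, b ∈ C ∖ W`, the graph
`G ∖ W` has an `a → b` path iff the torso of `G` on `C` minus `W` has one. -/
theorem stmt13 [Fintype V] (E : V → V → Prop) (C W : Set V) (hW : W ⊆ C)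
    (a b : V) (ha : a ∈ C) (ha' : a ∉ W) (hb : b ∈ C) (hb' : b ∉ W) :
    Reach E W a b ↔ Reach (torsoE E C) W a b := by
  constructor
  · rintro ⟨-, -, h⟩
    refine ⟨ha', hb', ?_⟩
    have key : ∀ x : V, Relation.ReflTransGen (fun u v => E u v ∧ u ∉ W ∧ v ∉ W) x b →
        (x ∈ C → Relation.ReflTransGen
          (fun u v => torsoE E C u v ∧ u ∉ W ∧ v ∉ W) x b) ∧
        (x ∉ C → ∃ c l, c ∈ C ∧ c ∉ W ∧
          Relation.ReflTransGen (fun u v => torsoE E C u v ∧ u ∉ W ∧ v ∉ W) c b ∧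
          WalkFromTo E x c l ∧ 2 ≤ l.length ∧ ∀ v ∈ l.dropLast, v ∉ C) := by
      intro x hx
      induction hx using Relation.ReflTransGen.head_induction_on with
      | refl => exact ⟨fun _ => .refl, fun hc => absurd hb hc⟩
      | head h' _ ih =>
        rename_i x y _
        obtain ⟨hxy, hxW, hyW⟩ := h'
        constructor
        · intro hxC
          by_cases hyC : y ∈ C
          · have edge : torsoE E C x y :=
              ⟨hxC, hyC, [x, y], ⟨List.isChain_pair.mpr hxy, rfl, rfl⟩, by simp,
                by simp⟩
            exact .head ⟨edge, hxW, hyW⟩ (ih.1 hyC)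
          · obtain ⟨c, l, hcC, hcW, hreach, ⟨hch, hhd, hlast⟩, hlen, hout⟩ := ih.2 hyC
            have hne : l ≠ [] := by rintro rfl; simp at hlen
            have edge : torsoE E C x c := by
              refine ⟨hxC, hcC, x :: l, ⟨List.isChain_cons.mpr ⟨?_, hch⟩, rfl,
                by rw [getLast?_cons_of_ne' x hne]; exact hlast⟩, by simp; omega, ?_⟩
              · intro z hz; rw [hhd] at hz; simp at hz; subst hz; exact hxy
              · simpa using hout
            exact .head ⟨edge, hxW, hcW⟩ hreach
        · intro hxC
          by_cases hyC : y ∈ C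
          · refine ⟨y, [x, y], hyC, hyW, ih.1 hyC,
              ⟨List.isChain_pair.mpr hxy, rfl, rfl⟩, by simp, ?_⟩
            intro v hv; simp at hv; subst hv; exact hxC
          · obtain ⟨c, l, hcC, hcW, hreach, ⟨hch, hhd, hlast⟩, hlen, hout⟩ := ih.2 hyC
            obtain ⟨p, ps, rfl⟩ : ∃ p ps, l = p :: ps := by
              cases l with
              | nil => simp at hlen
              | cons p ps => exact ⟨p, ps, rfl⟩
            refine ⟨c, x :: p :: ps, hcC, hcW, hreach,
              ⟨List.isChain_cons.mpr ⟨?_, hch⟩, rfl,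
                by rw [getLast?_cons_of_ne' x (by simp)]; exact hlast⟩,
              by simp, ?_⟩
            · intro z hz; rw [hhd] at hz; simp at hz; subst hz; exact hxy
            · intro v hv
              rw [List.dropLast_cons₂] at hv
              rcases List.mem_cons.1 hv with rfl | hv
              · exact hxC
              · exact hout v hv
    exact (key a h).1 ha
  · rintro ⟨-, -, h⟩
    refine ⟨ha', hb', ?_⟩
    induction h with
    | refl => exact .refl
    | tail _ hstep ih =>
      obtain ⟨⟨huC, _, l, ⟨hch, hhd, hlast⟩, _, hout⟩, huW, hvW⟩ := hstep
      refine (ih huC huW).trans (reach_of_walk' E W l _ _ hch hhd hlast ?_)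
      intro z hz
      rcases mem_decomp' l _ _ hhd hlast z hz with rfl | rfl | hz
      · exact huW
      · exact hvW
      · exact fun hzW => hout z hz (hW hzW)
end

section
/- Torso preserves S-closed-walks: Let G be a directed graph, C ⊆ V(G), S ⊆ E(G), and (G', S') = torso(G, C, S). Then for any v ∈ C and W ⊆ C, G ∖ W has a closed walk through v using an edge of S if and only if G' ∖ W has a closed walk through v using an edge of S'. -/
variable {V : Type*}

namespace Stmt14Aux

open List Relation

/-- The edge relation of `G ∖ W`. -/
def Res (E : V → V → Prop) (W : Set V) : V → V → Prop :=
  fun x y => E x y ∧ x ∉ W ∧ y ∉ W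

theorem gl_cons (a : V) (l : List V) : (a :: l).getLast? = some (l.getLastD a) := by
  rw [List.getLast?_cons, List.getLastD_eq_getLast?]

theorem gl_append_cons : ∀ (l₁ : List V) (a y : V) (l₂ : List V),
    (l₁ ++ y :: l₂).getLastD a = l₂.getLastD y
  | [], a, y, l₂ => by rw [List.nil_append, List.getLastD_cons]
  | c :: t, a, y, l₂ => by
    rw [List.cons_append, List.getLastD_cons]
    exact gl_append_cons t c y l₂

theorem gl_concat (l : List V) (a b : V) : (l ++ [b]).getLastD a = b := by
  rw [List.getLastD_eq_getLast?, List.getLast?_concat]; rfl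

theorem chain_append_single {R : V → V → Prop} :
    ∀ (l : List V) (a b : V), List.Chain R a l → R (l.getLastD a) b →
      List.Chain R a (l ++ [b])
  | [], a, b, _, h => by simpa using List.Chain.cons h List.Chain.nil
  | c :: t, a, b, hc, h => by
    rcases List.chain_cons.1 hc with ⟨hac, ht⟩
    rw [List.getLastD_cons] at h
    exact List.Chain.cons hac (chain_append_single t c b ht h)

theorem chain_append {R : V → V → Prop} {a b : V} {l₁ l₂ : List V}
    (h1 : List.Chain R a l₁) (h2 : R (l₁.getLastD a) b) (h3 : List.Chain R b l₂) :
    List.Chain R a (l₁ ++ b :: l₂) :=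
  List.isChain_cons_split.2 ⟨chain_append_single l₁ a b h1 h2, h3⟩

theorem reach_head {R : V → V → Prop} :
    ∀ (l : List V) (a b : V), List.Chain R a l → b ∈ a :: l → ReflTransGen R a b
  | [], a, b, _, hb => by
    simp only [List.mem_singleton] at hb; subst hb; exact ReflTransGen.refl
  | c :: t, a, b, hc, hb => by
    rcases List.chain_cons.1 hc with ⟨hac, ht⟩
    rcases List.mem_cons.1 hb with rfl | hb
    · exact ReflTransGen.refl
    · exact ReflTransGen.head hac (reach_head t c b ht hb)

theorem reach_last {R : V → V → Prop} :
    ∀ (l : List V) (a b : V), List.Chain R a l → b ∈ a :: l →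
      ReflTransGen R b (l.getLastD a)
  | [], a, b, _, hb => by
    simp only [List.mem_singleton] at hb; subst hb; exact ReflTransGen.refl
  | c :: t, a, b, hc, hb => by
    rcases List.chain_cons.1 hc with ⟨hac, ht⟩
    rw [List.getLastD_cons]
    rcases List.mem_cons.1 hb with rfl | hb
    · exact ReflTransGen.head hac (reach_last t c c ht List.mem_cons_self)
    · exact reach_last t c b ht hb

theorem rtg_chain {R : V → V → Prop} {a b : V} (h : ReflTransGen R a b) :
    ∃ l : List V, List.Chain R a l ∧ l.getLastD a = b := by
  induction h with
  | refl => exact ⟨[], List.Chain.nil, rfl⟩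
  | @tail m c _ h2 ih =>
    rcases ih with ⟨l, hl, hlast⟩
    exact ⟨l ++ [c], chain_append_single l a c hl (hlast ▸ h2), gl_concat l a c⟩

theorem junction : ∀ (l₁ : List V) (a y : V) (l₂ : List V),
    (l₁.getLastD a, y) ∈ ((a :: l₁) ++ y :: l₂).zip (l₁ ++ y :: l₂)
  | [], a, y, l₂ => by simp [List.zip_cons_cons]
  | c :: t, a, y, l₂ => by
    rw [List.getLastD_cons, List.cons_append, List.cons_append, List.zip_cons_cons]
    exact List.mem_cons_of_mem _ (by simpa using junction t c y l₂)

theorem chain_restrict {R : V → V → Prop} {P : V → Prop} :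
    ∀ (l : List V) (a : V), List.Chain R a l → (∀ x ∈ a :: l, P x) →
      List.Chain (fun x y => R x y ∧ P x ∧ P y) a l
  | [], _, _, _ => List.Chain.nil
  | c :: t, a, hc, hP => by
    rcases List.chain_cons.1 hc with ⟨hac, ht⟩
    exact List.Chain.cons ⟨hac, hP a (by simp), hP c (by simp)⟩
      (chain_restrict t c ht (fun x hx => hP x (List.mem_cons_of_mem a hx)))

theorem res_to_chain {E : V → V → Prop} {W : Set V} :
    ∀ {l : List V} {a : V}, List.Chain (Res E W) a l → ∀ x ∈ l, x ∉ W := by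
  intro l
  induction l with
  | nil => intro a _ x hx; simp at hx
  | cons c t ih =>
    intro a hc x hx
    rcases List.chain_cons.1 hc with ⟨hac, ht⟩
    rcases List.mem_cons.1 hx with rfl | hx
    · exact hac.2.2
    · exact ih ht x hx

theorem walk_mem_notW {E : V → V → Prop} {C W : Set V} (hW : W ⊆ C) {a b : V} {l : List V}
    (h : WalkFromTo E a b l) (hint : ∀ x ∈ l.tail.dropLast, x ∉ C)
    (ha : a ∉ W) (hb : b ∉ W) : ∀ x ∈ l, x ∉ W := by
  rcases h with ⟨_, hh, hl⟩
  obtain ⟨t, rfl⟩ : ∃ t, l = a :: t := by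
    cases l with
    | nil => simp at hh
    | cons a' t =>
      have : a' = a := by simpa using hh
      exact ⟨t, by rw [this]⟩
  intro x hx
  rcases List.mem_cons.1 hx with rfl | hx
  · exact ha
  · have htne : t ≠ [] := List.ne_nil_of_mem hx
    have hlb : t.getLast htne = b := by
      rw [gl_cons] at hl
      have : t.getLastD a = b := by simpa using hl
      rwa [List.getLastD_eq_getLast?, List.getLast?_eq_getLast htne, Option.getD_some] at this
    rw [← List.dropLast_concat_getLast htne] at hx
    rcases List.mem_append.1 hx with hx | hx
    · exact fun hxW => hint x (by simpa using hx) (hW hxW)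
    · simp only [List.mem_singleton] at hx
      subst hx; rw [hlb]; exact hb

theorem torsoS_sub {E : V → V → Prop} {C : Set V} {S : Set (V × V)}
    (hSE : ∀ p ∈ S, E p.1 p.2) : ∀ p ∈ torsoS E C S, torsoE E C p.1 p.2 := by
  rintro ⟨x, y⟩ (⟨hS, hx, hy⟩ | ⟨hx, hy, l, hw, hlen, hint, _⟩)
  · refine ⟨hx, hy, [x, y], ⟨?_, by simp, by simp⟩, by simp, by simp⟩
    simpa [List.Chain', List.isChain_cons_cons] using hSE (x, y) hS
  · exact ⟨hx, hy, l, hw, hlen, hint⟩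

theorem hasSCW_iff (E : V → V → Prop) (S : Set (V × V)) (W : Set V) (v : V)
    (hSE : ∀ p ∈ S, E p.1 p.2) :
    HasSCWThrough E S W v ↔ ∃ p ∈ S, Reach E W v p.1 ∧ Reach E W p.2 v := by
  constructor
  · rintro ⟨l, hch, hlen, hcl, hWl, hvl, ⟨x, y⟩, hq, hqS⟩
    obtain ⟨a, t, rfl⟩ : ∃ a t, l = a :: t := by
      cases l with
      | nil => simp at hlen
      | cons a t => exact ⟨a, t, rfl⟩
    have hch' : List.Chain E a t := hch
    have hres : List.Chain (Res E W) a t := chain_restrict t a hch' hWl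
    have hlast : t.getLastD a = a := by
      rw [gl_cons] at hcl
      have : some a = some (t.getLastD a) := by simpa using hcl
      exact (Option.some_injective _ this).symm
    have hx : x ∈ a :: t := (List.of_mem_zip hq).1
    have hy : y ∈ a :: t := List.mem_cons_of_mem a ((List.of_mem_zip hq).2)
    refine ⟨(x, y), hqS, ⟨hWl v hvl, hWl x hx, ?_⟩, ⟨hWl y hy, hWl v hvl, ?_⟩⟩
    · exact (hlast ▸ reach_last t a v hres hvl).trans (reach_head t a x hres hx)
    · exact (hlast ▸ reach_last t a y hres hy).trans (reach_head t a v hres hvl)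
  · rintro ⟨⟨x, y⟩, hS, ⟨hvW, hxW, hvx⟩, ⟨hyW, _, hyv⟩⟩
    obtain ⟨l₁, hc1, he1⟩ := rtg_chain hvx
    obtain ⟨l₂, hc2, he2⟩ := rtg_chain hyv
    have hcomb : List.Chain (Res E W) v (l₁ ++ y :: l₂) :=
      chain_append hc1 (he1 ▸ ⟨hSE (x, y) hS, hxW, hyW⟩) hc2
    refine ⟨(v :: l₁) ++ y :: l₂, ?_, ?_, ?_, ?_, ?_, ⟨(x, y), ?_, hS⟩⟩
    · rw [List.cons_append]
      exact List.Chain.imp (fun a b h => h.1) hcomb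
    · simp only [List.length_append, List.length_cons]; omega
    · rw [List.cons_append, gl_cons, gl_append_cons, he2]
      simp
    · intro z hz
      rw [List.cons_append, List.mem_cons] at hz
      rcases hz with rfl | hz
      · exact hvW
      · exact res_to_chain hcomb z hz
    · simp
    · have := junction l₁ v y l₂
      rw [he1] at this
      simpa using this
end Stmt14Aux

namespace Stmt14Aux

theorem torso_reach {E : V → V → Prop} {C W : Set V} (hW : W ⊆ C) {a b : V}
    (h : Relation.ReflTransGen (Res (torsoE E C) W) a b) :
    Relation.ReflTransGen (Res E W) a b := by
  induction h with
  | refl => exact Relation.ReflTransGen.refl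
  | @tail m c _ h2 ih =>
    rcases h2 with ⟨⟨hmC, hcC, l, hwalk, hlen, hint⟩, hmW, hcW⟩
    have hvw := walk_mem_notW hW hwalk hint hmW hcW
    obtain ⟨t, rfl⟩ : ∃ t, l = m :: t := by
      rcases l with _ | ⟨a', t⟩
      · exact absurd hwalk.2.1 (by simp)
      · have : a' = m := by simpa using hwalk.2.1
        exact ⟨t, by rw [this]⟩
    have hch : List.Chain E m t := hwalk.1
    have hres : List.Chain (Res E W) m t := chain_restrict t m hch hvw
    have hlast : t.getLastD m = c := by
      have := hwalk.2.2
      rw [gl_cons] at this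
      simpa using this
    exact ih.trans (hlast ▸ reach_last t m m hres List.mem_cons_self)

theorem decomp_fwd {E : V → V → Prop} {C W : Set V} (hW : W ⊆ C) {a x : V}
    (ha : a ∈ C) (haW : a ∉ W) (h : Relation.ReflTransGen (Res E W) a x) :
    ∃ c, c ∈ C ∧ c ∉ W ∧ Relation.ReflTransGen (Res (torsoE E C) W) a c ∧
      ∃ l, List.Chain (Res E W) c l ∧ l.getLastD c = x ∧ ∀ z ∈ l, z ∉ C := by
  induction h with
  | refl => exact ⟨a, ha, haW, Relation.ReflTransGen.refl, [], List.Chain.nil, rfl, by simp⟩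
  | @tail m x _ hmx ih =>
    rcases ih with ⟨c, hcC, hcW, hreach, l, hchain, hlast, hlC⟩
    rcases hmx with ⟨hE, hmW, hxW⟩
    by_cases hxC : x ∈ C
    · refine ⟨x, hxC, hxW,
        hreach.tail ⟨⟨hcC, hxC, (c :: l) ++ [x], ⟨?_, ?_, ?_⟩, ?_, ?_⟩, hcW, hxW⟩,
        [], List.Chain.nil, rfl, by simp⟩
      · rw [List.cons_append]
        exact chain_append_single l c x (List.Chain.imp (fun a b h => h.1) hchain)
          (hlast ▸ hE)
      · simp
      · rw [List.cons_append, gl_cons, gl_concat]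
      · simp only [List.length_append, List.length_cons]; omega
      · intro z hz
        rw [List.cons_append, List.tail_cons, List.dropLast_concat] at hz
        exact hlC z hz
    · refine ⟨c, hcC, hcW, hreach, l ++ [x],
        chain_append_single l c x hchain (hlast ▸ ⟨hE, hmW, hxW⟩), gl_concat l c x, ?_⟩
      intro z hz
      rcases List.mem_append.1 hz with hz | hz
      · exact hlC z hz
      · simp only [List.mem_singleton] at hz; subst hz; exact hxC

theorem decomp_bwd {E : V → V → Prop} {C W : Set V} (hW : W ⊆ C) {y b : V}
    (hb : b ∈ C) (hbW : b ∉ W) (h : Relation.ReflTransGen (Res E W) y b) :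
    ∃ d, d ∈ C ∧ d ∉ W ∧ Relation.ReflTransGen (Res (torsoE E C) W) d b ∧
      ∃ l, List.Chain (Res E W) y l ∧ l.getLastD y = d ∧
        ∀ z ∈ (y :: l).dropLast, z ∉ C := by
  induction h using Relation.ReflTransGen.head_induction_on with
  | refl => exact ⟨b, hb, hbW, Relation.ReflTransGen.refl, [], List.Chain.nil, rfl, by simp⟩
  | @head y m hym _ ih =>
    rcases ih with ⟨d, hdC, hdW, hreach, l, hch, hlast, hdrop⟩
    have hyW : y ∉ W := hym.2.1
    by_cases hyC : y ∈ C
    · refine ⟨y, hyC, hyW,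
        Relation.ReflTransGen.head ⟨⟨hyC, hdC, y :: m :: l, ⟨?_, rfl, ?_⟩, ?_, ?_⟩, hyW, hdW⟩
          hreach, [], List.Chain.nil, rfl, by simp⟩
      · exact List.Chain.cons hym.1 (List.Chain.imp (fun a b h => h.1) hch)
      · rw [gl_cons, List.getLastD_cons, hlast]
      · simp
      · intro z hz
        rw [List.tail_cons] at hz
        exact hdrop z hz
    · refine ⟨d, hdC, hdW, hreach, m :: l, List.Chain.cons hym hch,
        by rw [List.getLastD_cons]; exact hlast, ?_⟩
      intro z hz
      have : (y :: m :: l).dropLast = y :: (m :: l).dropLast := rfl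
      rw [this, List.mem_cons] at hz
      rcases hz with rfl | hz
      · exact hyC
      · exact hdrop z hz

end Stmt14Aux

open Stmt14Aux in
/-- Torso preserves `S`-closed-walks: for `v ∈ C` and `W ⊆ C`, the graph
`G ∖ W` has a closed walk through `v` using an edge of `S` iff the torso
`(G', S') = torso(G, C, S)` minus `W` has a closed walk through `v` using an
edge of `S'`. -/
theorem stmt14 [Fintype V] (E : V → V → Prop) (C : Set V) (S : Set (V × V))
    (hSE : ∀ p ∈ S, E p.1 p.2) (v : V) (hv : v ∈ C) (W : Set V) (hW : W ⊆ C) :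
    HasSCWThrough E S W v ↔ HasSCWThrough (torsoE E C) (torsoS E C S) W v := by
  rw [hasSCW_iff E S W v hSE,
    hasSCW_iff (torsoE E C) (torsoS E C S) W v (torsoS_sub hSE)]
  constructor
  · rintro ⟨⟨x, y⟩, hS, ⟨hvW, hxW, hvx⟩, ⟨hyW, _, hyv⟩⟩
    obtain ⟨c, hcC, hcW, hreach1, l₁, hch1, hlast1, hl1C⟩ := decomp_fwd hW hv hvW hvx
    obtain ⟨d, hdC, hdW, hreach2, l₂, hch2, hlast2, hl2C⟩ := decomp_bwd hW hv hvW hyv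
    have hedge : (c, d) ∈ torsoS E C S := by
      refine Or.inr ⟨hcC, hdC, (c :: l₁) ++ y :: l₂, ⟨?_, ?_, ?_⟩, ?_, ?_, ⟨(x, y), ?_, hS⟩⟩
      · rw [List.cons_append]
        exact chain_append (List.Chain.imp (fun a b h => h.1) hch1)
          (hlast1 ▸ hSE (x, y) hS) (List.Chain.imp (fun a b h => h.1) hch2)
      · simp
      · rw [List.cons_append, gl_cons, gl_append_cons, hlast2]
      · simp only [List.length_append, List.length_cons]; omega
      · intro z hz
        rw [List.cons_append, List.tail_cons,
          List.dropLast_append_of_ne_nil (List.cons_ne_nil y l₂)] at hz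
        rcases List.mem_append.1 hz with hz | hz
        · exact hl1C z hz
        · exact hl2C z hz
      · have := junction l₁ c y l₂
        rw [hlast1] at this
        simpa using this
    exact ⟨(c, d), hedge, ⟨hvW, hcW, hreach1⟩, ⟨hdW, hvW, hreach2⟩⟩
  · rintro ⟨⟨a, b⟩, hS', ⟨hvW, haW, hva⟩, ⟨hbW, _, hbv⟩⟩
    have hva' : Relation.ReflTransGen (Res E W) v a := torso_reach hW hva
    have hbv' : Relation.ReflTransGen (Res E W) b v := torso_reach hW hbv
    rcases hS' with ⟨hS, _, _⟩ | ⟨haC, hbC, l, hwalk, hlen, hint, ⟨x, y⟩, hq, hqS⟩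
    · exact ⟨(a, b), hS, ⟨hvW, haW, hva'⟩, ⟨hbW, hvW, hbv'⟩⟩
    · have hvw := walk_mem_notW hW hwalk hint haW hbW
      obtain ⟨t, rfl⟩ : ∃ t, l = a :: t := by
        rcases l with _ | ⟨a', t⟩
        · exact absurd hwalk.2.1 (by simp)
        · have : a' = a := by simpa using hwalk.2.1
          exact ⟨t, by rw [this]⟩
      have hch : List.Chain E a t := hwalk.1
      have hres : List.Chain (Res E W) a t := chain_restrict t a hch hvw
      have hlast : t.getLastD a = b := by
        have := hwalk.2.2
        rw [gl_cons] at this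
        simpa using this
      have hx : x ∈ a :: t := (List.of_mem_zip hq).1
      have hy : y ∈ a :: t := List.mem_cons_of_mem a ((List.of_mem_zip hq).2)
      refine ⟨(x, y), hqS, ⟨hvW, hvw x hx, ?_⟩, ⟨hvw y hy, hvW, ?_⟩⟩
      · exact hva'.trans (reach_head t a x hres hx)
      · exact (hlast ▸ reach_last t a y hres hy).trans hbv'
end

section
/- Let I = (G, S, T, k) be an instance of Disjoint Subset-DFVS Compression and Z ⊆ V(G) ∖ T. If the reduced instance I/Z (obtained by taking the torso on V(G) ∖ Z) has a solution, then I has a solution; i.e., if I is a no-instance then I/Z is a no-instance. -/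
variable {V : Type*}

def pairs (l : List V) : List (V × V) := l.zip l.tail
lemma pairs_nil : pairs ([] : List V) = [] := rfl
lemma pairs_single (a : V) : pairs [a] = [] := rfl
lemma pairs_cons_cons (a b : V) (t : List V) :
    pairs (a :: b :: t) = (a, b) :: pairs (b :: t) := rfl

lemma pairs_append_cons : ∀ (X : List V) (b : V) (Y : List V),
    pairs (X ++ b :: Y) = pairs (X ++ [b]) ++ pairs (b :: Y)
  | [], b, Y => by simp [pairs_single]
  | [x], b, Y => by simp [pairs_cons_cons, pairs_single]
  | x :: x' :: X, b, Y => by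
      have ih := pairs_append_cons (x' :: X) b Y
      simp only [List.cons_append] at ih ⊢
      rw [pairs_cons_cons, pairs_cons_cons]
      simp only [List.cons_append] at ih ⊢
      rw [ih]

lemma pairs_mem_append_left : ∀ (X Y : List V) (q : V × V), q ∈ pairs X → q ∈ pairs (X ++ Y)
  | [], Y, q, h => by simp [pairs_nil] at h
  | [x], Y, q, h => by simp [pairs_single] at h
  | x :: x' :: X, Y, q, h => by
      rw [pairs_cons_cons] at h
      simp only [List.cons_append]
      rw [pairs_cons_cons]
      rcases List.mem_cons.mp h with h | h
      · exact List.mem_cons.mpr (Or.inl h)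
      · exact List.mem_cons.mpr (Or.inr (pairs_mem_append_left (x' :: X) Y q h))

lemma pairs_mem_append_right (X : List V) (b : V) (Y : List V) (q : V × V)
    (h : q ∈ pairs (b :: Y)) : q ∈ pairs (X ++ b :: Y) := by
  rw [pairs_append_cons]
  exact List.mem_append.mpr (Or.inr h)

lemma pairs_mem_concat : ∀ (X : List V) (x b : V), X.getLast? = some x → (x, b) ∈ pairs (X ++ [b])
  | [], x, b, h => by simp at h
  | [a], x, b, h => by
      simp at h
      subst h
      simp [pairs_cons_cons, pairs_single]

  | a :: a' :: X, x, b, h => by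
      rw [List.getLast?_cons_cons] at h
      simp only [List.cons_append]
      rw [pairs_cons_cons]
      exact List.mem_cons.mpr (Or.inr (pairs_mem_concat (a' :: X) x b h))

lemma pairs_length {l : List V} {q : V × V} (h : q ∈ pairs l) : 2 ≤ l.length := by
  match l with
  | [] => simp [pairs_nil] at h
  | [a] => simp [pairs_single] at h
  | a :: b :: t => simp




lemma contract (E : V → V → Prop) (C : Set V) (S : Set (V × V)) :
    ∀ (l seg : List V) (c : V),
      c ∈ C → (∀ x ∈ seg, x ∉ C) →
      List.Chain' E (c :: (seg ++ l)) →
      (∀ e, (c :: (seg ++ l)).getLast? = some e → e ∈ C) →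
      (l = [] → seg = []) →
      ∃ l' : List V, List.Chain' (torsoE E C) l' ∧ l'.head? = some c ∧
        l'.getLast? = (c :: (seg ++ l)).getLast? ∧
        (∀ x ∈ l', x ∈ c :: (seg ++ l)) ∧
        (∀ q ∈ pairs (c :: (seg ++ l)), q ∈ S → ∃ q' ∈ pairs l', q' ∈ torsoS E C S)
  | [], seg, c, hc, hseg, hch, hlast, hnil => by
      obtain rfl : seg = [] := hnil rfl
      exact ⟨[c], List.isChain_singleton c, rfl, by simp, by simp,
        fun q hq _ => by simp [pairs_single] at hq⟩
  | d :: l₂, seg, c, hc, hseg, hch, hlast, _ => by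
      have hfull : c :: (seg ++ d :: l₂) = (c :: seg) ++ (d :: l₂) := by simp
      by_cases hd : d ∈ C
      · -- close the segment with torso edge c → d
        have hch' : List.Chain' E (((c :: seg) ++ [d]) ++ l₂) := by
          simpa [List.append_assoc] using hch
        obtain ⟨hchW, hchR, hcross⟩ := List.isChain_append.mp hch'
        have hch2 : List.Chain' E (d :: l₂) := by
          rw [hfull] at hch
          exact (List.isChain_append.mp hch).2.1
        have hlasteq : (c :: (seg ++ d :: l₂)).getLast? = (d :: l₂).getLast? := by
          rw [hfull, List.getLast?_append]
          cases h : (d :: l₂).getLast? with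
          | none => simp at h
          | some e => simp
        have hlast2 : ∀ e, (d :: l₂).getLast? = some e → e ∈ C := by
          intro e he; exact hlast e (by rw [hlasteq, he])
        obtain ⟨l'', hch'', hh'', hl'', hmem'', htr''⟩ :=
          contract E C S l₂ [] d hd (by simp) (by simpa using hch2) (by simpa using hlast2)
            (fun _ => rfl)
        obtain ⟨r, rfl⟩ : ∃ r, l'' = d :: r := by
          cases l'' with
          | nil => simp at hh''
          | cons a r => exact ⟨r, by simpa using congrArg (fun o => (Option.getD o d) :: r) hh''⟩
        have hwalk : WalkFromTo E c d ((c :: seg) ++ [d]) :=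
          ⟨hchW, by simp, List.getLast?_concat⟩
        have hlen : 2 ≤ ((c :: seg) ++ [d]).length := by simp
        have hint : ∀ x ∈ ((c :: seg) ++ [d]).tail.dropLast, x ∉ C := by
          intro x hx
          have : ((c :: seg) ++ [d]).tail = seg ++ [d] := by simp
          rw [this, List.dropLast_concat] at hx
          exact hseg x hx
        have hcd : torsoE E C c d := ⟨hc, hd, (c :: seg) ++ [d], hwalk, hlen, hint⟩
        refine ⟨c :: d :: r, List.isChain_cons_cons.mpr ⟨hcd, hch''⟩, rfl, ?_, ?_, ?_⟩
        · rw [List.getLast?_cons_cons, hl'', hlasteq]; simp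
        · intro x hx
          rcases List.mem_cons.mp hx with rfl | hx
          · exact List.mem_cons_self
          · have := hmem'' x hx
            rw [hfull]
            exact List.mem_append.mpr (Or.inr (by simpa using this))
        · intro q hq hqS
          rw [hfull, pairs_append_cons] at hq
          rcases List.mem_append.mp hq with hq | hq
          · refine ⟨(c, d), by rw [pairs_cons_cons]; exact List.mem_cons_self, ?_⟩
            exact Or.inr ⟨hc, hd, (c :: seg) ++ [d], hwalk, hlen, hint, q, hq, hqS⟩
          · obtain ⟨q', hq', hq'S⟩ := htr'' q (by simpa using hq) hqS
            exact ⟨q', by rw [pairs_cons_cons]; exact List.mem_cons.mpr (Or.inr hq'), hq'S⟩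
      · -- absorb d into the segment
        have hl₂ : l₂ ≠ [] := by
          rintro rfl
          have : (c :: (seg ++ [d])).getLast? = some d := by
            have : c :: (seg ++ [d]) = (c :: seg) ++ [d] := by simp
            rw [this]; exact List.getLast?_concat
          exact hd (hlast d this)
        have heq : seg ++ d :: l₂ = (seg ++ [d]) ++ l₂ := by simp
        have hseg' : ∀ x ∈ seg ++ [d], x ∉ C := by
          intro x hx
          rcases List.mem_append.mp hx with hx | hx
          · exact hseg x hx
          · simp at hx; subst hx; exact hd
        rw [heq] at hch hlast ⊢
        exact contract E C S l₂ (seg ++ [d]) c hc hseg' hch hlast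
          (fun h => absurd h hl₂)

lemma rotate (E : V → V → Prop) (l : List V) (hch : l.Chain' E)
    (hcl : l.head? = l.getLast?) (c : V) (hc : c ∈ l) :
    ∃ r : List V, r.Chain' E ∧ r.head? = some c ∧ r.getLast? = some c ∧
      (∀ x ∈ r, x ∈ l) ∧ (∀ q ∈ pairs l, q ∈ pairs r) := by
  obtain ⟨l₁, l₂, rfl⟩ := List.append_of_mem hc
  cases l₁ with
  | nil =>
      exact ⟨c :: l₂, by simpa using hch, rfl, by simpa using hcl.symm,
        fun x h => by simpa using h, fun q h => by simpa using h⟩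
  | cons a l₁' =>
      have hhead : ((a :: l₁') ++ c :: l₂).head? = some a := rfl
      have hlasta : (c :: l₂).getLast? = some a := by
        have h1 : ((a :: l₁') ++ c :: l₂).getLast? = (c :: l₂).getLast? := by
          rw [List.getLast?_append]
          cases h : (c :: l₂).getLast? with
          | none => simp at h
          | some e => simp
        rw [← h1, ← hcl, hhead]
      obtain ⟨hch1, hch2, hcross12⟩ := List.isChain_append.mp hch
      have hchpre : List.Chain' E ((a :: l₁') ++ [c]) := by
        have : (a :: l₁') ++ c :: l₂ = ((a :: l₁') ++ [c]) ++ l₂ := by simp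
        rw [this] at hch
        exact (List.isChain_append.mp hch).1
      have hchmid : List.Chain' E (l₁' ++ [c]) := hchpre.tail
      have hheads : (l₁' ++ [c]).head? = (l₁' ++ c :: l₂).head? := by
        cases l₁' <;> simp
      have hcrossr : ∀ x ∈ (c :: l₂).getLast?, ∀ y ∈ (l₁' ++ [c]).head?, E x y := by
        intro x hx y hy
        rw [hlasta] at hx
        simp only [Option.mem_def, Option.some.injEq] at hx
        subst hx
        have := List.isChain_cons.mp (by simpa [List.Chain'] using hch)
        rw [hheads] at hy
        exact this.1 y hy
      refine ⟨(c :: l₂) ++ (l₁' ++ [c]),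
        List.isChain_append.mpr ⟨hch2, hchmid, hcrossr⟩, rfl,
        by rw [List.getLast?_append]; simp, ?_, ?_⟩
      · intro x hx
        simp only [List.mem_append, List.mem_cons] at hx ⊢
        tauto
      · intro q hq
        have hsplit : pairs ((a :: l₁') ++ c :: l₂)
            = pairs ((a :: l₁') ++ [c]) ++ pairs (c :: l₂) := pairs_append_cons _ _ _
        rw [hsplit] at hq
        rcases List.mem_append.mp hq with hq | hq
        · cases l₁' with
          | nil =>
              simp only [List.cons_append, List.nil_append, pairs_cons_cons, pairs_single] at hq
              simp only [List.mem_cons, List.not_mem_nil, or_false] at hq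
              subst hq
              have : (a, c) ∈ pairs ((c :: l₂) ++ [c]) := pairs_mem_concat _ a c hlasta
              simpa using this
          | cons d l₁'' =>
              simp only [List.cons_append, pairs_cons_cons] at hq
              rcases List.mem_cons.mp hq with rfl | hq
              · have h1 : (a, d) ∈ pairs ((c :: l₂) ++ [d]) := pairs_mem_concat _ a d hlasta
                have h2 := pairs_mem_append_left ((c :: l₂) ++ [d]) (l₁'' ++ [c]) (a, d) h1
                simpa [List.append_assoc] using h2
              · have := pairs_mem_append_right (c :: l₂) d (l₁'' ++ [c]) q hq
                simpa using this
        · exact pairs_mem_append_left _ _ _ hq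


/-- If the reduced instance `I/Z` of Disjoint Subset-DFVS Compression (obtained
by taking the torso on `V(G) ∖ Z`) has a solution, then the original instance
`I = (G, S, T, k)` has a solution; equivalently, if `I` is a no-instance then
`I/Z` is a no-instance. -/
theorem stmt15 [Fintype V] (E : V → V → Prop) (S : Set (V × V))
    (hSE : ∀ p ∈ S, E p.1 p.2) (T : Set V) (k : ℕ)
    (hT : ¬ HasSCW E S T) (Z : Set V) (hZ : Disjoint Z T)
    (T₂ : Set V) (hT₂C : T₂ ⊆ Zᶜ) (hT₂T : Disjoint T₂ T) (hT₂k : T₂.ncard ≤ k)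
    (hsol : ¬ HasSCW (torsoE E Zᶜ) (torsoS E Zᶜ S) T₂) :
    ∃ T₁ : Set V, Disjoint T₁ T ∧ T₁.ncard ≤ k ∧ ¬ HasSCW E S T₁ := by
  refine ⟨T₂, hT₂T, hT₂k, ?_⟩
  rintro ⟨v, l, hch, hlen, hcl, hav, hv, q, hq, hqS⟩
  by_cases hex : ∃ x ∈ l, x ∈ Zᶜ
  · obtain ⟨c, hcmem, hcC⟩ := hex
    obtain ⟨r, hrch, hrh, hrl, hrmem, hrpairs⟩ := rotate E l hch hcl c hcmem
    obtain ⟨rt, rfl⟩ : ∃ rt, r = c :: rt := by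
      cases r with
      | nil => simp at hrh
      | cons a rt =>
          simp only [List.head?_cons, Option.some.injEq] at hrh
          exact ⟨rt, by rw [hrh]⟩
    have hlastC : ∀ e, (c :: ([] ++ rt)).getLast? = some e → e ∈ Zᶜ := by
      intro e he
      simp only [List.nil_append] at he
      rw [hrl] at he
      simp only [Option.some.injEq] at he
      subst he; exact hcC
    obtain ⟨l', hl'ch, hl'h, hl'l, hl'mem, hl'tr⟩ :=
      contract E Zᶜ S rt [] c hcC (by simp) (by simpa using hrch) hlastC (fun _ => rfl)
    have hqr : q ∈ pairs (c :: rt) := hrpairs q hq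
    obtain ⟨q', hq', hq'S⟩ := hl'tr q (by simpa using hqr) hqS
    refine hsol ⟨c, l', hl'ch, pairs_length hq', ?_, ?_, ?_, q', hq', hq'S⟩
    · rw [hl'h, hl'l]
      simp only [List.nil_append]
      exact hrl.symm
    · intro x hx
      have hxr : x ∈ c :: rt := by simpa using hl'mem x hx
      exact hav x (hrmem x hxr)
    · cases l' with
      | nil => simp at hl'h
      | cons a t =>
          simp only [List.head?_cons, Option.some.injEq] at hl'h
          subst hl'h
          exact List.mem_cons_self
  · push_neg at hex
    exact hT ⟨v, l, hch, hlen, hcl,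
      fun x hx => Set.disjoint_left.mp hZ (by simpa using hex x hx), hv, q, hq, hqS⟩
end

section
/- Let I = (G, S, T, k) be an instance of Disjoint Subset-DFVS Compression, Z ⊆ V(G) ∖ T, and suppose T' is a solution of I with T' ∩ Z = ∅ and f_{G,T}(T') ∪ r_{G,T}(T') ⊆ Z. Then T' is a shadowless solution of the reduced instance I/Z, i.e., T' is a solution of I/Z with f_{G',T}(T') = r_{G',T}(T') = ∅. -/
variable {V : Type*}

/-- The forward shadow of `W` with respect to `T`, within the vertex set `U`:
vertices `v ∈ U ∖ (W ∪ T)` with no `T`-to-`v` path in `G ∖ W`. -/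
def fshadowOn (E : V → V → Prop) (U T W : Set V) : Set V :=
  {v | v ∈ U ∧ v ∉ W ∧ v ∉ T ∧ ∀ t ∈ T, ¬ Reach E W t v}

/-- The reverse shadow of `W` with respect to `T`, within the vertex set `U`:
vertices `v ∈ U ∖ (W ∪ T)` with no `v`-to-`T` path in `G ∖ W`. -/
def rshadowOn (E : V → V → Prop) (U T W : Set V) : Set V :=
  {v | v ∈ U ∧ v ∉ W ∧ v ∉ T ∧ ∀ t ∈ T, ¬ Reach E W v t}

section Aux

private lemma zip_decomp : ∀ {l : List V} {p : V × V}, p ∈ l.zip l.tail →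
    ∃ u w, l = u ++ p.1 :: p.2 :: w := by
  intro l
  induction l with
  | nil => intro p h; simp at h
  | cons a l ih =>
    intro p h
    cases l with
    | nil => simp at h
    | cons b l' =>
      simp only [List.tail_cons, List.zip_cons_cons, List.mem_cons] at h
      rcases h with rfl | h
      · exact ⟨[], l', rfl⟩
      · obtain ⟨u, w, hw⟩ := ih (by simpa using h)
        exact ⟨a :: u, w, by rw [List.cons_append, ← hw]⟩

private lemma pair_mem_zip (a b : V) : ∀ (u w : List V),
    (a, b) ∈ (u ++ a :: b :: w).zip (u ++ a :: b :: w).tail := by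
  intro u
  induction u with
  | nil => intro w; simp
  | cons x u ih =>
    intro w
    have hne : u ++ a :: b :: w ≠ [] := by simp
    obtain ⟨y, L', hL⟩ := List.exists_cons_of_ne_nil hne
    have h2 : (a, b) ∈ (y :: L').zip L' := by
      have h3 := ih w
      rw [hL] at h3
      simpa using h3
    simp only [List.cons_append, hL, List.tail_cons, List.zip_cons_cons]
    exact List.mem_cons_of_mem _ h2

private lemma glue_eq {A B : List V} {x : V} (hA : A.getLast? = some x)
    (hB : B.head? = some x) : A ++ B.tail = A.dropLast ++ B := by
  have h1 : A.dropLast ++ [x] = A := List.dropLast_append_getLast? _ hA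
  have h2 : x :: B.tail = B := List.cons_head?_tail hB
  rw [← h1, ← h2]; simp

private lemma chain'_glue {R : V → V → Prop} {A B : List V} {x : V}
    (hA : List.Chain' R A) (hB : List.Chain' R B)
    (h1 : A.getLast? = some x) (h2 : B.head? = some x) :
    List.Chain' R (A ++ B.tail) := by
  have hB' : x :: B.tail = B := List.cons_head?_tail h2
  refine hA.append ?_ ?_
  · rw [← hB'] at hB; exact hB.tail
  · intro a ha b hb
    rw [h1, Option.mem_some_iff] at ha; subst ha
    rw [← hB'] at hB
    exact (List.isChain_cons.mp hB).1 b hb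

private lemma glue_getLast {A B : List V} {x : V} (h1 : A.getLast? = some x)
    (h2 : B.head? = some x) : (A ++ B.tail).getLast? = B.getLast? := by
  have hB' : x :: B.tail = B := List.cons_head?_tail h2
  cases hB : B.tail with
  | nil =>
    have hBx : B = [x] := by rw [← hB', hB]
    subst hBx
    simpa using h1
  | cons y t =>
    rw [List.getLast?_append_of_ne_nil _ (by simp [hB]), ← hB', hB,
      List.getLast?_cons_cons]

private lemma head?_append_ne {A : List V} (B : List V) (h : A ≠ []) :
    (A ++ B).head? = A.head? := by
  cases A with
  | nil => exact absurd rfl h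
  | cons a t => simp

private lemma walk_mem {m : List V} {a b : V} (h1 : m.head? = some a)
    (h2 : m.getLast? = some b) : ∀ x ∈ m, x = a ∨ x = b ∨ x ∈ m.tail.dropLast := by
  have hm : a :: m.tail = m := List.cons_head?_tail h1
  intro x hx
  rw [← hm] at hx
  rcases List.mem_cons.mp hx with rfl | hx
  · exact Or.inl rfl
  rcases eq_or_ne m.tail [] with ht | ht
  · rw [ht] at hx; simp at hx
  have htl : m.tail.getLast? = some b := by
    obtain ⟨c, t, hct⟩ := List.exists_cons_of_ne_nil ht
    rw [← hm, hct, List.getLast?_cons_cons] at h2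
    rw [hct]; exact h2
  have heq : m.tail.dropLast ++ [b] = m.tail := List.dropLast_append_getLast? _ htl
  rw [← heq] at hx
  rcases List.mem_append.mp hx with hx | hx
  · exact Or.inr (Or.inr hx)
  · simp at hx; exact Or.inr (Or.inl hx)

private lemma chain_snd {R : V → V → Prop} {P : V → Prop} (h : ∀ x y, R x y → P y) :
    ∀ {a : V} {l : List V}, List.Chain R a l → ∀ x ∈ l, P x := by
  intro a l hc
  induction l generalizing a with
  | nil => simp
  | cons b l ih =>
    intro x hx
    have hc' : List.IsChain R (a :: b :: l) := hc
    rw [List.isChain_cons_cons] at hc'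
    rcases List.mem_cons.mp hx with rfl | hx
    · exact h _ _ hc'.1
    · exact ih hc'.2 x hx

private lemma expand (E : V → V → Prop) (Z : Set V) :
    ∀ l : List V, List.Chain' (torsoE E Zᶜ) l →
    ∃ L : List V, List.Chain' E L ∧ L.head? = l.head? ∧ L.getLast? = l.getLast? ∧
      ∀ x ∈ L, x ∈ l ∨ x ∈ Z := by
  intro l
  induction l with
  | nil => exact fun _ => ⟨[], by simp [List.Chain']⟩
  | cons a l ih =>
    cases l with
    | nil => exact fun _ => ⟨[a], by simp [List.Chain']⟩
    | cons b l' =>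
      intro h
      simp only [List.Chain', List.isChain_cons_cons] at h
      obtain ⟨hab, hrest⟩ := h
      obtain ⟨L', hc', hh', hl', hm'⟩ := ih hrest
      obtain ⟨haC, hbC, m, ⟨hmch, hmh, hml⟩, hmlen, hmint⟩ := hab
      have hm_ne : m ≠ [] := by rintro rfl; simp at hmh
      have hh'' : L'.head? = some b := by rw [hh']; rfl
      refine ⟨m ++ L'.tail, chain'_glue hmch hc' hml hh'', ?_, ?_, ?_⟩
      · rw [head?_append_ne _ hm_ne, hmh]; rfl
      · rw [glue_getLast hml hh'', hl', List.getLast?_cons_cons]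
      · intro x hx
        rcases List.mem_append.mp hx with hx | hx
        · rcases walk_mem hmh hml x hx with rfl | rfl | hx
          · exact Or.inl (by simp)
          · exact Or.inl (by simp)
          · right; simpa using hmint x hx
        · rcases hm' x (List.mem_of_mem_tail hx) with hx | hx
          · exact Or.inl (List.mem_cons_of_mem _ hx)
          · exact Or.inr hx

private lemma compress (E : V → V → Prop) (Z W : Set V) :
    ∀ n : ℕ, ∀ l : List V, l.length ≤ n → ∀ a b : V,
      List.Chain (fun x y => E x y ∧ x ∉ W ∧ y ∉ W) a l →
      a ∉ Z → a ∉ W → (a :: l).getLast? = some b → b ∉ Z →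
      Relation.ReflTransGen (fun x y => torsoE E Zᶜ x y ∧ x ∉ W ∧ y ∉ W) a b := by
  classical
  intro n
  induction n with
  | zero =>
    intro l hl a b _ _ _ hlast _
    have : l = [] := List.length_eq_zero_iff.mp (Nat.le_zero.mp hl)
    subst this
    simp only [List.getLast?_singleton, Option.some_inj] at hlast
    exact hlast ▸ .refl
  | succ n ih =>
    intro l hl a b hc haZ haW hlast hbZ
    rcases eq_or_ne l [] with rfl | hne
    · simp only [List.getLast?_singleton, Option.some_inj] at hlast
      exact hlast ▸ .refl
    have hlastl : l.getLast? = some b := by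
      obtain ⟨c, l₀, rfl⟩ := List.exists_cons_of_ne_nil hne
      rwa [List.getLast?_cons_cons] at hlast
    set p : V → Bool := fun v => decide (v ∈ Z) with hp
    have hsplit : l.takeWhile p ++ l.dropWhile p = l := List.takeWhile_append_dropWhile
    have hdne : l.dropWhile p ≠ [] := by
      intro hd
      rw [List.dropWhile_eq_nil_iff] at hd
      have hb : b ∈ l := by
        have := List.getLast?_eq_getLast_of_ne_nil hne
        rw [this, Option.some_inj] at hlastl
        exact hlastl ▸ List.getLast_mem hne
      exact hbZ (by simpa [hp] using hd b hb)
    obtain ⟨h, r, hd⟩ := List.exists_cons_of_ne_nil hdne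
    have hhZ : h ∉ Z := by
      have h1 := List.head_dropWhile_not p hdne
      have h2 : (l.dropWhile p).head hdne = h := by
        rw [List.head_eq_iff_head?_eq_some, hd]; rfl
      rw [h2] at h1
      simpa [hp] using h1
    set t := l.takeWhile p with htdef
    have hleq : l = t ++ h :: r := by rw [htdef, ← hd, hsplit]
    rw [hleq] at hc; replace hc := List.isChain_cons_split.mp hc
    obtain ⟨hc1, hc2⟩ := hc
    have htZ : ∀ x ∈ t, x ∈ Z := fun x hx => by
      simpa [hp] using List.mem_takeWhile_imp hx
    have hW : ∀ x ∈ t ++ [h], x ∉ W :=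
      chain_snd (fun x y hxy => hxy.2.2) hc1
    have hhW : h ∉ W := hW h (by simp)
    have hmch : List.Chain' E (a :: (t ++ [h])) := by
      show List.Chain E a (t ++ [h])
      exact List.Chain.imp (fun x y hxy => hxy.1) hc1
    have hedge : torsoE E Zᶜ a h := by
      refine ⟨haZ, hhZ, a :: (t ++ [h]), ⟨hmch, rfl, ?_⟩, by simp, ?_⟩
      · rw [show a :: (t ++ [h]) = (a :: t) ++ [h] by simp, List.getLast?_concat]
      · intro x hx
        rw [List.tail_cons, List.dropLast_concat] at hx
        simpa using htZ x hx
    have hrlen : r.length ≤ n := by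
      have := hl
      rw [hleq] at this
      simp only [List.length_append, List.length_cons] at this
      omega
    have hlast' : (h :: r).getLast? = some b := by
      rw [hleq] at hlastl
      rwa [List.getLast?_append_of_ne_nil _ (by simp)] at hlastl
    exact Relation.ReflTransGen.head ⟨hedge, haW, hhW⟩
      (ih r hrlen h b hc2 hhZ hhW hlast' hbZ)

end Aux


/-- If `T'` is a solution of the instance `I = (G, S, T, k)` of Disjoint
Subset-DFVS Compression with `T' ∩ Z = ∅` and `f_{G,T}(T') ∪ r_{G,T}(T') ⊆ Z`,
then `T'` is a shadowless solution of the reduced instance `I/Z`. -/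
theorem stmt16 [Fintype V] (E : V → V → Prop) (S : Set (V × V))
    (hSE : ∀ p ∈ S, E p.1 p.2) (T : Set V) (k : ℕ)
    (hT : ¬ HasSCW E S T) (Z : Set V) (hZ : Disjoint Z T)
    (T' : Set V) (hT'T : Disjoint T' T) (hT'k : T'.ncard ≤ k)
    (hsol : ¬ HasSCW E S T') (hT'Z : Disjoint T' Z)
    (hshadow : fshadowOn E Set.univ T T' ∪ rshadowOn E Set.univ T T' ⊆ Z) :
    ¬ HasSCW (torsoE E Zᶜ) (torsoS E Zᶜ S) T' ∧
      fshadowOn (torsoE E Zᶜ) Zᶜ T T' = ∅ ∧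
      rshadowOn (torsoE E Zᶜ) Zᶜ T T' = ∅ := by
  have hmemZ : ∀ x ∈ Z, x ∉ T' := fun x hx hxT' => Set.disjoint_left.mp hT'Z hxT' hx
  refine ⟨?_, ?_, ?_⟩
  · rintro ⟨v0, l, hch, hlen, hcl, hlT', hv0, q, hq, hqS⟩
    obtain ⟨u, w, hleq⟩ := zip_decomp hq
    subst hleq
    simp only [torsoS, Set.mem_union, Set.mem_setOf_eq] at hqS
    have hm : ∃ m : List V, List.Chain' E m ∧ m.head? = some q.1 ∧ m.getLast? = some q.2 ∧
        (∀ x ∈ m.tail.dropLast, x ∈ Z) ∧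
        ∃ m1 s1 s2 m2, m = m1 ++ s1 :: s2 :: m2 ∧ (s1, s2) ∈ S := by
      rcases hqS with ⟨hqS, _, _⟩ | ⟨_, _, m, ⟨hc, hh, hl2⟩, _, hint, q', hq', hq'S⟩
      · refine ⟨[q.1, q.2], List.isChain_cons_cons.mpr ⟨hSE q hqS, List.isChain_singleton _⟩,
          rfl, by simp, by simp, [], q.1, q.2, [], rfl, ?_⟩
        simpa using hqS
      · obtain ⟨m1, m2, hdec⟩ := zip_decomp hq'
        exact ⟨m, hc, hh, hl2, fun x hx => by simpa using hint x hx,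
          m1, q'.1, q'.2, m2, hdec, by simpa using hq'S⟩
    obtain ⟨m, hmch, hmh, hml, hmint, m1, s1, s2, m2, hmeq, hS⟩ := hm
    have hsp := List.isChain_split.mp hch
    have hc1 := hsp.1
    have hc2 : List.Chain' (torsoE E Zᶜ) (q.2 :: w) := (List.isChain_cons.mp hsp.2).2
    obtain ⟨L1, hc1E, h1h, h1l, h1m⟩ := expand E Z _ hc1
    obtain ⟨L2, hc2E, h2h, h2l, h2m⟩ := expand E Z _ hc2
    have h1l' : L1.getLast? = some q.1 := by rw [h1l, List.getLast?_concat]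
    have h2h' : L2.head? = some q.2 := by rw [h2h]; rfl
    have hAl : (L1 ++ m.tail).getLast? = some q.2 := by rw [glue_getLast h1l' hmh, hml]
    set L := (L1 ++ m.tail) ++ L2.tail with hLdef
    have hchL : List.Chain' E L := chain'_glue (chain'_glue hc1E hmch h1l' hmh) hc2E hAl h2h'
    have hL1ne : L1 ≠ [] := by rintro rfl; simp at h1l'
    have hL1mne : L1 ++ m.tail ≠ [] := fun hcon => hL1ne (List.append_eq_nil_iff.mp hcon).1
    have hheadL : L.head? = (u ++ q.1 :: q.2 :: w).head? := by
      rw [hLdef, head?_append_ne _ hL1mne, head?_append_ne _ hL1ne, h1h]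
      cases u <;> simp
    have hlastL : L.getLast? = (u ++ q.1 :: q.2 :: w).getLast? := by
      rw [hLdef, glue_getLast hAl h2h', h2l,
        List.getLast?_append_of_ne_nil u (l₂ := q.1 :: q.2 :: w) (by simp),
        List.getLast?_cons_cons]
    have hLdec : L = (L1.dropLast ++ m1) ++ s1 :: s2 :: (m2 ++ L2.tail) := by
      rw [hLdef, glue_eq h1l' hmh, hmeq]
      simp [List.append_assoc]
    have hpair : (s1, s2) ∈ L.zip L.tail := hLdec ▸ pair_mem_zip s1 s2 _ _
    have hs1L : s1 ∈ L := by rw [hLdec]; simp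
    have hlenL : 2 ≤ L.length := by rw [hLdec]; simp [List.length_append]; omega
    have hmemL : ∀ x ∈ L, x ∉ T' := by
      intro x hx
      have hin : x ∈ (u ++ q.1 :: q.2 :: w) ∨ x ∈ Z := by
        rw [hLdef] at hx
        rcases List.mem_append.mp hx with hx | hx
        · rcases List.mem_append.mp hx with hx | hx
          · rcases h1m x hx with hx | hx
            · left
              rcases List.mem_append.mp hx with hx | hx
              · exact List.mem_append.mpr (Or.inl hx)
              · simp only [List.mem_singleton] at hx
                subst hx
                simp
            · exact Or.inr hx
          · rcases walk_mem hmh hml x (List.mem_of_mem_tail hx) with rfl | rfl | hx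
            · left; simp
            · left; simp
            · exact Or.inr (hmint x hx)
        · rcases h2m x (List.mem_of_mem_tail hx) with hx | hx
          · exact Or.inl (List.mem_append.mpr (Or.inr (List.mem_cons_of_mem _ hx)))
          · exact Or.inr hx
      rcases hin with hx' | hx'
      · exact hlT' x hx'
      · exact hmemZ x hx'
    exact hsol ⟨s1, L, hchL, hlenL, by rw [hheadL, hlastL]; exact hcl, hmemL,
      hs1L, (s1, s2), hpair, hS⟩
  · rw [Set.eq_empty_iff_forall_notMem]
    rintro v ⟨hvC, hvT', hvT, hall⟩
    have hvZ : v ∉ Z := hvC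
    have hnot : ¬ (v ∈ Set.univ ∧ v ∉ T' ∧ v ∉ T ∧ ∀ t ∈ T, ¬ Reach E T' t v) :=
      fun hmem => hvZ (hshadow (Set.mem_union_left _ hmem))
    push_neg at hnot
    obtain ⟨t, htT, hre⟩ := hnot (Set.mem_univ v) hvT' hvT
    obtain ⟨htT', hvT'2, hrt⟩ := hre
    obtain ⟨lc, hchain, hgl⟩ := List.exists_isChain_cons_of_relationReflTransGen hrt
    have hgl? : (t :: lc).getLast? = some v := by
      rw [List.getLast?_eq_getLast_of_ne_nil (List.cons_ne_nil _ _)]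
      exact congrArg some hgl
    have htZ : t ∉ Z := Set.disjoint_right.mp hZ htT
    exact hall t htT ⟨htT', hvT',
      compress E Z T' lc.length lc le_rfl t v hchain htZ htT' hgl? hvZ⟩
  · rw [Set.eq_empty_iff_forall_notMem]
    rintro v ⟨hvC, hvT', hvT, hall⟩
    have hvZ : v ∉ Z := hvC
    have hnot : ¬ (v ∈ Set.univ ∧ v ∉ T' ∧ v ∉ T ∧ ∀ t ∈ T, ¬ Reach E T' v t) :=
      fun hmem => hvZ (hshadow (Set.mem_union_right _ hmem))
    push_neg at hnot
    obtain ⟨t, htT, hre⟩ := hnot (Set.mem_univ v) hvT' hvT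
    obtain ⟨hvT'2, htT', hrt⟩ := hre
    obtain ⟨lc, hchain, hgl⟩ := List.exists_isChain_cons_of_relationReflTransGen hrt
    have hgl? : (v :: lc).getLast? = some t := by
      rw [List.getLast?_eq_getLast_of_ne_nil (List.cons_ne_nil _ _)]
      exact congrArg some hgl
    have htZ : t ∉ Z := Set.disjoint_right.mp hZ htT
    exact hall t htT ⟨hvT'2, htT',
      compress E Z T' lc.length lc le_rfl v t hchain hvZ hvT'2 hgl? htZ⟩
end
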